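/- arXiv:1107.4837 — 7 statements merged into one kernel-verified Lean document; each statement's English description precedes it below -/
import Mathlib

section
/- If p > 1, f : (0,∞) → [0,∞) is measurable with 0 < ∫₀^∞ f(x)^p dx < ∞, and F(x) = ∫₀^x f(t) dt, then ∫₀^∞ (F(x)/x)^p dx ≤ (p/(p-1))^p ∫₀^∞ f(x)^p dx. -/
open MeasureTheory Set
open scoped ENNReal

lemma hardy_pointwise (p : ℝ) (hp : 1 < p) (f : ℝ → ℝ) (hf_meas : Measurable f)
    (hf_nonneg : ∀ x, 0 ≤ f x) (F : ℝ → ℝ) (hF : ∀ x, F x = ∫ t in (0:ℝ)..x, f t)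
    (x : ℝ) (hx : 0 < x) :
    ENNReal.ofReal ((F x / x) ^ p) ≤
      ENNReal.ofReal (((p-1)/p) ^ (1-p) * x ^ (1/p - 2)) *
        ∫⁻ t in Ioc (0:ℝ) x, ENNReal.ofReal (f t ^ p * t ^ ((p-1)/p)) := by
  have hp0 : (0:ℝ) < p := lt_trans one_pos hp
  have hp1 : (0:ℝ) < p - 1 := by linarith
  set r : ℝ := (p - 1) / p with hr_def
  have hr0 : 0 < r := div_pos hp1 hp0
  set q : ℝ := p / (p - 1) with hq_def
  have hq0 : 0 < q := div_pos hp0 hp1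
  have hpq : p.HolderConjugate q := Real.HolderConjugate.conjExponent hp
  set s : ℝ := r / p with hs_def
  have hs0 : 0 < s := div_pos hr0 hp0
  have hsp : s * p = r := by rw [hs_def]; field_simp
  have hsq : s * q = 1 / p := by
    rw [hs_def, hr_def, hq_def]
    field_simp
  set A : ℝ≥0∞ := ∫⁻ t in Ioc (0:ℝ) x, ENNReal.ofReal (f t ^ p * t ^ r) with hA_def
  set B : ℝ≥0∞ := ENNReal.ofReal (x ^ r / r) with hB_def
  -- Step a: bound ofReal (F x)
  have hFx_le : ENNReal.ofReal (F x) ≤ ∫⁻ t in Ioc (0:ℝ) x, ENNReal.ofReal (f t) := by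
    rw [hF x, intervalIntegral.integral_of_le hx.le]
    by_cases hint : IntegrableOn f (Ioc 0 x)
    · rw [ofReal_integral_eq_lintegral_ofReal hint
        (Filter.Eventually.of_forall fun t => hf_nonneg t)]
    · rw [MeasureTheory.integral_undef hint]
      simp
  -- Step b: Hölder
  have holder : (∫⁻ t in Ioc (0:ℝ) x, ENNReal.ofReal (f t)) ≤ A ^ (1/p) * B ^ (1/q) := by
    set u : ℝ → ℝ≥0∞ := fun t => ENNReal.ofReal (f t * t ^ s) with hu_def
    set v : ℝ → ℝ≥0∞ := fun t => ENNReal.ofReal (t ^ (-s)) with hv_def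
    have hu_meas : AEMeasurable u (volume.restrict (Ioc (0:ℝ) x)) := by
      apply Measurable.aemeasurable; measurability
    have hv_meas : AEMeasurable v (volume.restrict (Ioc (0:ℝ) x)) := by
      apply Measurable.aemeasurable; measurability
    have h1 : (∫⁻ t in Ioc (0:ℝ) x, ENNReal.ofReal (f t))
        = ∫⁻ t in Ioc (0:ℝ) x, (u * v) t := by
      refine lintegral_congr_ae ?_
      filter_upwards [ae_restrict_mem measurableSet_Ioc] with t ht
      have ht0 : 0 < t := ht.1
      show ENNReal.ofReal (f t) = ENNReal.ofReal (f t * t ^ s) * ENNReal.ofReal (t ^ (-s))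
      rw [← ENNReal.ofReal_mul (mul_nonneg (hf_nonneg t) (Real.rpow_nonneg ht0.le _)),
        mul_assoc, ← Real.rpow_add ht0, add_neg_cancel, Real.rpow_zero, mul_one]
    have h2 : (∫⁻ t in Ioc (0:ℝ) x, u t ^ p) = A := by
      refine lintegral_congr_ae ?_
      filter_upwards [ae_restrict_mem measurableSet_Ioc] with t ht
      have ht0 : 0 < t := ht.1
      show ENNReal.ofReal (f t * t ^ s) ^ p = ENNReal.ofReal (f t ^ p * t ^ r)
      rw [ENNReal.ofReal_rpow_of_nonneg
          (mul_nonneg (hf_nonneg t) (Real.rpow_nonneg ht0.le _)) hp0.le,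
        Real.mul_rpow (hf_nonneg t) (Real.rpow_nonneg ht0.le _),
        ← Real.rpow_mul ht0.le, hsp]
    have h3 : (∫⁻ t in Ioc (0:ℝ) x, v t ^ q) = B := by
      have e1 : (∫⁻ t in Ioc (0:ℝ) x, v t ^ q)
          = ∫⁻ t in Ioc (0:ℝ) x, ENNReal.ofReal (t ^ (-(1/p))) := by
        refine lintegral_congr_ae ?_
        filter_upwards [ae_restrict_mem measurableSet_Ioc] with t ht
        have ht0 : 0 < t := ht.1
        show ENNReal.ofReal (t ^ (-s)) ^ q = ENNReal.ofReal (t ^ (-(1/p)))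
        rw [ENNReal.ofReal_rpow_of_nonneg (Real.rpow_nonneg ht0.le _) hq0.le,
          ← Real.rpow_mul ht0.le, neg_mul, hsq]
      have hint : IntegrableOn (fun t : ℝ => t ^ (-(1/p))) (Ioc 0 x) := by
        rw [← intervalIntegrable_iff_integrableOn_Ioc_of_le hx.le]
        exact intervalIntegral.intervalIntegrable_rpow'
          (by have h := (div_lt_one hp0).mpr hp; linarith)
      have e2 : (∫ t in Ioc (0:ℝ) x, t ^ (-(1/p))) = x ^ r / r := by
        rw [← intervalIntegral.integral_of_le hx.le,
          integral_rpow (Or.inl (by have h := (div_lt_one hp0).mpr hp; linarith))]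
        have : -(1/p) + 1 = r := by rw [hr_def]; field_simp; ring
        rw [this, Real.zero_rpow hr0.ne', sub_zero]
      rw [e1, ← ofReal_integral_eq_lintegral_ofReal hint
          (by filter_upwards [ae_restrict_mem measurableSet_Ioc] with t ht
              exact Real.rpow_nonneg ht.1.le _), e2, hB_def]
    calc (∫⁻ t in Ioc (0:ℝ) x, ENNReal.ofReal (f t))
        = ∫⁻ t in Ioc (0:ℝ) x, (u * v) t := h1
      _ ≤ (∫⁻ t in Ioc (0:ℝ) x, u t ^ p) ^ (1/p) * (∫⁻ t in Ioc (0:ℝ) x, v t ^ q) ^ (1/q) :=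
          ENNReal.lintegral_mul_le_Lp_mul_Lq _ hpq hu_meas hv_meas
      _ = A ^ (1/p) * B ^ (1/q) := by rw [h2, h3]
  -- Step c: conclude
  have hFx0 : 0 ≤ F x := by
    rw [hF x]
    exact intervalIntegral.integral_nonneg hx.le (fun t _ => hf_nonneg t)
  have hqp : 1/q * p = p - 1 := by rw [hq_def]; field_simp
  have key : ENNReal.ofReal (F x) ^ p ≤ A * B ^ (p - 1) := by
    calc ENNReal.ofReal (F x) ^ p ≤ (A ^ (1/p) * B ^ (1/q)) ^ p :=
          ENNReal.rpow_le_rpow (hFx_le.trans holder) hp0.le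
      _ = (A ^ (1/p)) ^ p * (B ^ (1/q)) ^ p := ENNReal.mul_rpow_of_nonneg _ _ hp0.le
      _ = A * B ^ (p-1) := by
          rw [← ENNReal.rpow_mul, ← ENNReal.rpow_mul, one_div_mul_cancel hp0.ne',
            ENNReal.rpow_one, hqp]
  have lhs_eq : ENNReal.ofReal ((F x / x) ^ p)
      = ENNReal.ofReal (F x) ^ p / ENNReal.ofReal (x ^ p) := by
    rw [Real.div_rpow hFx0 hx.le, ENNReal.ofReal_div_of_pos (Real.rpow_pos_of_pos hx p),
      ENNReal.ofReal_rpow_of_nonneg hFx0 hp0.le]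
  have hexp : r * (p-1) - p = 1/p - 2 := by rw [hr_def]; field_simp; ring
  have hBp : B ^ (p-1) / ENNReal.ofReal (x ^ p)
      = ENNReal.ofReal (r ^ ((1:ℝ)-p) * x ^ (1/p - 2)) := by
    rw [hB_def, ENNReal.ofReal_rpow_of_nonneg
        (div_nonneg (Real.rpow_nonneg hx.le _) hr0.le) (by linarith),
      ← ENNReal.ofReal_div_of_pos (Real.rpow_pos_of_pos hx p)]
    congr 1
    have e : (x ^ r / r) ^ (p-1) / x ^ p = (x ^ (r*(p-1)) / x ^ p) / r ^ (p-1) := by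
      rw [Real.div_rpow (Real.rpow_nonneg hx.le _) hr0.le, ← Real.rpow_mul hx.le]
      ring
    rw [e, ← Real.rpow_sub hx, hexp, div_eq_mul_inv, ← Real.rpow_neg hr0.le,
      show -(p-1) = 1-p by ring, mul_comm]
  rw [lhs_eq]
  refine (ENNReal.div_le_div_right key _).trans ?_
  rw [mul_div_assoc, hBp, mul_comm]

theorem hardy_integral_inequality
    (p : ℝ) (hp : 1 < p)
    (f : ℝ → ℝ) (hf_meas : Measurable f)
    (hf_nonneg : ∀ x, 0 ≤ f x)
    (hf_int : IntegrableOn (fun x => f x ^ p) (Ioi (0:ℝ)))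
    (hf_pos : 0 < ∫ x in Ioi (0:ℝ), f x ^ p)
    (F : ℝ → ℝ) (hF : ∀ x, F x = ∫ t in (0:ℝ)..x, f t) :
    ∫⁻ x in Ioi (0:ℝ), ENNReal.ofReal ((F x / x) ^ p)
      ≤ ENNReal.ofReal ((p / (p - 1)) ^ p * ∫ x in Ioi (0:ℝ), f x ^ p) := by
  have hp0 : (0:ℝ) < p := lt_trans one_pos hp
  have hp1 : (0:ℝ) < p - 1 := by linarith
  set r : ℝ := (p-1)/p with hr_def
  have hr0 : 0 < r := div_pos hp1 hp0
  set c : ℝ := r ^ ((1:ℝ)-p) with hc_def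
  have hc0 : 0 ≤ c := Real.rpow_nonneg hr0.le _
  set g : ℝ → ℝ≥0∞ := fun t => ENNReal.ofReal (f t ^ p * t ^ r) with hg_def
  have hg_meas : Measurable g := by
    apply ENNReal.measurable_ofReal.comp
    measurability
  have hg_ne_top : ∀ t, g t ≠ ⊤ := fun t => ENNReal.ofReal_ne_top
  set w : ℝ → ℝ≥0∞ := fun x => ENNReal.ofReal (c * x ^ (1/p - 2)) with hw_def
  have hw_meas : Measurable w := by
    apply ENNReal.measurable_ofReal.comp
    measurability
  have hexp2 : (1:ℝ)/p - 2 < -1 := by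
    have := (div_lt_one hp0).mpr hp; linarith
  -- Step 1 : pointwise bound
  have step1 : (∫⁻ x in Ioi (0:ℝ), ENNReal.ofReal ((F x / x) ^ p))
      ≤ ∫⁻ x in Ioi (0:ℝ), w x * ∫⁻ t in Ioc (0:ℝ) x, g t := by
    refine lintegral_mono_ae ?_
    filter_upwards [ae_restrict_mem measurableSet_Ioi] with x hx
    exact hardy_pointwise p hp f hf_meas hf_nonneg F hF x hx
  have inner_eq : ∀ x : ℝ, (∫⁻ t in Ioc (0:ℝ) x, g t)
      = ∫⁻ t in Ioi (0:ℝ), (Iic x).indicator g t := by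
    intro x
    rw [lintegral_indicator measurableSet_Iic, Measure.restrict_restrict measurableSet_Iic,
      inter_comm, Ioi_inter_Iic]
  set S : Set (ℝ × ℝ) := {z : ℝ × ℝ | z.2 ≤ z.1} with hS_def
  have hS : MeasurableSet S := measurableSet_le measurable_snd measurable_fst
  set D : ℝ × ℝ → ℝ≥0∞ := fun z => w z.1 * S.indicator (fun z => g z.2) z with hD_def
  have hD_meas : Measurable D :=
    (hw_meas.comp measurable_fst).mul ((hg_meas.comp measurable_snd).indicator hS)
  have swap : (∫⁻ x in Ioi (0:ℝ), w x * ∫⁻ t in Ioi (0:ℝ), (Iic x).indicator g t)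
      = ∫⁻ t in Ioi (0:ℝ), ∫⁻ x in Ioi (0:ℝ), D (x, t) := by
    have e : ∀ x, (w x * ∫⁻ t in Ioi (0:ℝ), (Iic x).indicator g t)
        = ∫⁻ t in Ioi (0:ℝ), D (x, t) := by
      intro x
      rw [← lintegral_const_mul' _ _ ENNReal.ofReal_ne_top]
      refine lintegral_congr fun t => ?_
      by_cases h : t ≤ x <;>
        simp [hD_def, Set.indicator_apply, hS_def, h, hw_def, hg_def]
    simp_rw [e]
    exact lintegral_lintegral_swap hD_meas.aemeasurable
  have inner2 : ∀ t : ℝ, 0 < t → (∫⁻ x in Ioi (0:ℝ), D (x, t))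
      = g t * ENNReal.ofReal (c * (t ^ (-r) / r)) := by
    intro t ht
    have e1 : ∀ x, D (x, t) = g t * (Ici t).indicator w x := by
      intro x
      by_cases h : t ≤ x <;>
        simp [hD_def, Set.indicator_apply, hS_def, h, hw_def, hg_def, mul_comm]
    simp_rw [e1]
    rw [lintegral_const_mul' _ _ (hg_ne_top t)]
    congr 1
    have hIci : Ici t ∩ Ioi (0:ℝ) = Ici t :=
      inter_eq_left.mpr fun y hy => lt_of_lt_of_le ht hy
    rw [lintegral_indicator measurableSet_Ici, Measure.restrict_restrict measurableSet_Ici,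
      hIci, ← Measure.restrict_congr_set (Ioi_ae_eq_Ici (a := t))]
    have hint : IntegrableOn (fun x : ℝ => c * x ^ (1/p - 2)) (Ioi t) :=
      (integrableOn_Ioi_rpow_of_lt hexp2 ht).const_mul c
    rw [← ofReal_integral_eq_lintegral_ofReal hint
      (by filter_upwards [ae_restrict_mem measurableSet_Ioi] with y hy
          exact mul_nonneg hc0 (Real.rpow_nonneg (le_of_lt (ht.trans hy)) _))]
    congr 1
    rw [MeasureTheory.integral_const_mul, integral_Ioi_rpow_of_lt hexp2 ht,
      show 1/p - 2 + 1 = -r by rw [hr_def]; field_simp; ring, neg_div_neg_eq]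
  have final : ∀ t : ℝ, 0 < t →
      g t * ENNReal.ofReal (c * (t ^ (-r) / r))
        = ENNReal.ofReal ((p/(p-1))^p) * ENNReal.ofReal (f t ^ p) := by
    intro t ht
    have hfp : 0 ≤ f t ^ p * t ^ r :=
      mul_nonneg (Real.rpow_nonneg (hf_nonneg t) p) (Real.rpow_nonneg ht.le r)
    rw [hg_def]
    show ENNReal.ofReal (f t ^ p * t ^ r) * ENNReal.ofReal (c * (t ^ (-r) / r)) = _
    rw [← ENNReal.ofReal_mul hfp, ← ENNReal.ofReal_mul
      (Real.rpow_nonneg (div_nonneg hp0.le hp1.le) p)]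
    congr 1
    have h1 : t ^ r * t ^ (-r) = 1 := by
      rw [← Real.rpow_add ht, add_neg_cancel, Real.rpow_zero]
    have h2 : c / r = (p/(p-1))^p := by
      have e : c / r = r ^ ((1:ℝ)-p) / r ^ (1:ℝ) := by rw [hc_def, Real.rpow_one]
      rw [e, ← Real.rpow_sub hr0, show (1:ℝ)-p-1 = -p by ring, Real.rpow_neg hr0.le,
        ← Real.inv_rpow hr0.le, hr_def, inv_div]
    calc f t ^ p * t ^ r * (c * (t ^ (-r) / r))
        = (c / r) * f t ^ p * (t ^ r * t ^ (-r)) := by ring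
      _ = (p/(p-1))^p * f t ^ p := by rw [h1, h2, mul_one]
  calc (∫⁻ x in Ioi (0:ℝ), ENNReal.ofReal ((F x / x) ^ p))
      ≤ ∫⁻ x in Ioi (0:ℝ), w x * ∫⁻ t in Ioc (0:ℝ) x, g t := step1
    _ = ∫⁻ x in Ioi (0:ℝ), w x * ∫⁻ t in Ioi (0:ℝ), (Iic x).indicator g t := by
        simp_rw [inner_eq]
    _ = ∫⁻ t in Ioi (0:ℝ), ∫⁻ x in Ioi (0:ℝ), D (x, t) := swap
    _ = ∫⁻ t in Ioi (0:ℝ), ENNReal.ofReal ((p/(p-1))^p) * ENNReal.ofReal (f t ^ p) := by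
        refine lintegral_congr_ae ?_
        filter_upwards [ae_restrict_mem measurableSet_Ioi] with t ht
        rw [inner2 t ht, final t ht]
    _ = ENNReal.ofReal ((p/(p-1))^p) * ∫⁻ t in Ioi (0:ℝ), ENNReal.ofReal (f t ^ p) :=
        lintegral_const_mul' _ _ ENNReal.ofReal_ne_top
    _ = ENNReal.ofReal ((p/(p-1))^p * ∫ t in Ioi (0:ℝ), f t ^ p) := by
        rw [← ofReal_integral_eq_lintegral_ofReal hf_int
          (Filter.Eventually.of_forall fun t => Real.rpow_nonneg (hf_nonneg t) p),
          ENNReal.ofReal_mul (Real.rpow_nonneg (div_nonneg hp0.le hp1.le) p)]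
end

section
/- If p > 1 and (aₙ) is a sequence of nonnegative reals with 0 < ∑ₙ aₙ^p < ∞, and Aₙ = a₁ + ⋯ + aₙ, then ∑ₙ (Aₙ/n)^p ≤ (p/(p-1))^p ∑ₙ aₙ^p. -/
open Finset Real

/-- Per-term key inequality for the discrete Hardy inequality. -/
lemma hardy_key {p : ℝ} (hp : 1 < p) (x z y : ℝ) (hx : 0 ≤ x) (hz : 0 ≤ z)
    (n : ℕ) (hy : y = ((n : ℝ) + 1) * x - (n : ℝ) * z) :
    x ^ p - (p / (p - 1)) * (x ^ (p - 1) * y)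
      ≤ ((n : ℝ) * z ^ p - ((n : ℝ) + 1) * x ^ p) / (p - 1) := by
  have hp0 : (0 : ℝ) < p := lt_trans one_pos hp
  have hp1 : (0 : ℝ) < p - 1 := sub_pos.mpr hp
  have hpne : p ≠ 0 := ne_of_gt hp0
  have hp1ne : p - 1 ≠ 0 := ne_of_gt hp1
  rcases eq_or_lt_of_le hx with h0 | hxpos
  · -- x = 0 case
    rw [← h0]
    rw [Real.zero_rpow hpne, Real.zero_rpow hp1ne]
    simp only [zero_mul, mul_zero, sub_zero]
    positivity
  · have hconj : (p / (p - 1)).HolderConjugate p :=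
      (Real.HolderConjugate.conjExponent hp).symm
    have hxx : x ^ (p - 1) * x = x ^ p := by
      rw [← Real.rpow_add_one (ne_of_gt hxpos) (p - 1), sub_add_cancel]
    have hxp : (x ^ (p - 1)) ^ (p / (p - 1)) = x ^ p := by
      rw [← Real.rpow_mul hx]
      congr 1
      field_simp
    have h := Real.young_inequality_of_nonneg
      (Real.rpow_nonneg hx (p - 1)) hz hconj
    rw [hxp] at h
    -- h : x^(p-1) * z ≤ x^p / (p/(p-1)) + z^p / p
    have hW : x ^ (p - 1) * z ≤ (p - 1) / p * x ^ p + z ^ p / p := by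
      have e : x ^ p / (p / (p - 1)) + z ^ p / p
          = (p - 1) / p * x ^ p + z ^ p / p := by
        field_simp
      linarith [h, e.symm.le, e.le]
    have hE : x ^ (p - 1) * y
        = ((n : ℝ) + 1) * x ^ p - (n : ℝ) * (x ^ (p - 1) * z) := by
      rw [hy, ← hxx]; ring
    have key2 : x ^ p - p / (p - 1) * (((n : ℝ) + 1) * x ^ p
          - (n : ℝ) * ((p - 1) / p * x ^ p + z ^ p / p))
        = ((n : ℝ) * z ^ p - ((n : ℝ) + 1) * x ^ p) / (p - 1) := by
      field_simp
      ring
    calc x ^ p - p / (p - 1) * (x ^ (p - 1) * y)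
        = x ^ p - p / (p - 1) * (((n : ℝ) + 1) * x ^ p
            - (n : ℝ) * (x ^ (p - 1) * z)) := by rw [hE]
      _ ≤ x ^ p - p / (p - 1) * (((n : ℝ) + 1) * x ^ p
            - (n : ℝ) * ((p - 1) / p * x ^ p + z ^ p / p)) := by
          have hc0 : (0:ℝ) ≤ p / (p - 1) * n := by positivity
          nlinarith [mul_le_mul_of_nonneg_left hW hc0]
      _ = _ := key2

/-- Finite-sum version of the discrete Hardy inequality, abstracted over α. -/
lemma hardy_aux {p : ℝ} (hp : 1 < p)
    (a : ℕ → ℝ) (ha : ∀ n, 0 ≤ a n)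
    (hsum : Summable (fun n => a n ^ p))
    (α : ℕ → ℝ) (hα : ∀ n, 0 ≤ α n)
    (hrec : ∀ n : ℕ, a n = ((n : ℝ) + 1) * α n - (n : ℝ) * α (n - 1)) :
    ∀ N : ℕ, ∑ n ∈ range N, α n ^ p ≤ (p / (p - 1)) ^ p * ∑' n, a n ^ p := by
  have hp0 : (0 : ℝ) < p := lt_trans one_pos hp
  have hp1 : (0 : ℝ) < p - 1 := sub_pos.mpr hp
  have hpne : p ≠ 0 := ne_of_gt hp0
  have hp1ne : p - 1 ≠ 0 := ne_of_gt hp1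
  set K : ℝ := ∑' n, a n ^ p with hK
  have hK0 : 0 ≤ K := tsum_nonneg fun n => Real.rpow_nonneg (ha n) p
  intro N
  -- Step 1: telescoping bound
  have key : ∀ n : ℕ, α n ^ p - (p / (p - 1)) * (α n ^ (p - 1) * a n)
      ≤ ((n : ℝ) * α (n - 1) ^ p - ((n : ℝ) + 1) * α n ^ p) / (p - 1) :=
    fun n => hardy_key hp (α n) (α (n - 1)) (a n) (hα n) (hα _) n (hrec n)
  set B : ℕ → ℝ := fun n => (n : ℝ) * α (n - 1) ^ p with hB
  have hterm : ∀ n : ℕ, ((n : ℝ) * α (n - 1) ^ p - ((n : ℝ) + 1) * α n ^ p)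
      = B n - B (n + 1) := by
    intro n
    simp only [hB, Nat.add_sub_cancel]
    push_cast
    ring
  have tele : ∑ n ∈ range N,
      (((n : ℝ) * α (n - 1) ^ p - ((n : ℝ) + 1) * α n ^ p) / (p - 1)) ≤ 0 := by
    rw [← Finset.sum_div]
    have : ∑ n ∈ range N, ((n : ℝ) * α (n - 1) ^ p - ((n : ℝ) + 1) * α n ^ p)
        = B 0 - B N := by
      rw [← Finset.sum_range_sub' B N]
      exact Finset.sum_congr rfl fun n _ => hterm n
    rw [this]
    have hB0 : B 0 = 0 := by simp [hB]
    have hBN : 0 ≤ B N := by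
      exact mul_nonneg (Nat.cast_nonneg N) (Real.rpow_nonneg (hα _) p)
    apply div_nonpos_of_nonpos_of_nonneg <;> linarith
  have hS : ∑ n ∈ range N, α n ^ p
      ≤ (p / (p - 1)) * ∑ n ∈ range N, α n ^ (p - 1) * a n := by
    have h1 := Finset.sum_le_sum (fun n (_ : n ∈ range N) => key n)
    rw [Finset.sum_sub_distrib, ← Finset.mul_sum] at h1
    linarith
  -- Step 2: Hölder
  have hconj : (p / (p - 1)).HolderConjugate p :=
    (Real.HolderConjugate.conjExponent hp).symm
  have hHolder := Real.inner_le_Lp_mul_Lq (range N)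
    (fun n => α n ^ (p - 1)) a hconj
  have habs1 : ∀ n : ℕ, |α n ^ (p - 1)| ^ (p / (p - 1)) = α n ^ p := by
    intro n
    rw [abs_of_nonneg (Real.rpow_nonneg (hα n) _), ← Real.rpow_mul (hα n)]
    congr 1
    field_simp
  have habs2 : ∀ n : ℕ, |a n| ^ p = a n ^ p := fun n => by
    rw [abs_of_nonneg (ha n)]
  simp only [habs1, habs2] at hHolder
  -- hHolder : ∑ α^(p-1) * a ≤ (∑ α^p)^(1/(p/(p-1))) * (∑ a^p)^(1/p)
  set S : ℝ := ∑ n ∈ range N, α n ^ p with hSdef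
  have hS0 : 0 ≤ S := Finset.sum_nonneg fun n _ => Real.rpow_nonneg (hα n) p
  rcases eq_or_lt_of_le hS0 with h0 | hSpos
  · rw [← h0]; positivity
  · have hKN : ∑ n ∈ range N, a n ^ p ≤ K :=
      Summable.sum_le_tsum _ (fun n _ => Real.rpow_nonneg (ha n) p) hsum
    have hKN0 : 0 ≤ ∑ n ∈ range N, a n ^ p :=
      Finset.sum_nonneg fun n _ => Real.rpow_nonneg (ha n) p
    have hKmono : (∑ n ∈ range N, a n ^ p) ^ (1 / p) ≤ K ^ (1 / p) :=
      Real.rpow_le_rpow hKN0 hKN (by positivity)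
    have hu : 1 / (p / (p - 1)) = (p - 1) / p := by
      rw [one_div_div]
    have hSsplit : S = S ^ ((p - 1) / p) * S ^ (1 / p) := by
      rw [← Real.rpow_add hSpos]
      have : (p - 1) / p + 1 / p = 1 := by field_simp; ring
      rw [this, Real.rpow_one]
    have hchain : S ≤ (p / (p - 1)) * (S ^ ((p - 1) / p) * K ^ (1 / p)) := by
      calc S ≤ (p / (p - 1)) * ∑ n ∈ range N, α n ^ (p - 1) * a n := hS
        _ ≤ (p / (p - 1)) * (S ^ (1 / (p / (p - 1)))
              * (∑ n ∈ range N, a n ^ p) ^ (1 / p)) := by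
            apply mul_le_mul_of_nonneg_left hHolder (by positivity)
        _ ≤ (p / (p - 1)) * (S ^ ((p - 1) / p) * K ^ (1 / p)) := by
            rw [hu]
            apply mul_le_mul_of_nonneg_left _ (by positivity)
            exact mul_le_mul_of_nonneg_left hKmono
              (Real.rpow_nonneg hS0 _)
    have hdiv : S ^ (1 / p) ≤ (p / (p - 1)) * K ^ (1 / p) := by
      have hSu : 0 < S ^ ((p - 1) / p) := Real.rpow_pos_of_pos hSpos _
      have h2 : S ^ (1 / p) * S ^ ((p - 1) / p)
          ≤ ((p / (p - 1)) * K ^ (1 / p)) * S ^ ((p - 1) / p) := by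
        calc S ^ (1 / p) * S ^ ((p - 1) / p) = S := by rw [mul_comm, ← hSsplit]
          _ ≤ (p / (p - 1)) * (S ^ ((p - 1) / p) * K ^ (1 / p)) := hchain
          _ = ((p / (p - 1)) * K ^ (1 / p)) * S ^ ((p - 1) / p) := by ring
      exact le_of_mul_le_mul_right h2 hSu
    have hfinal := Real.rpow_le_rpow (Real.rpow_nonneg hS0 _) hdiv hp0.le
    have e1 : (S ^ (1 / p)) ^ p = S := by
      rw [← Real.rpow_mul hS0, one_div_mul_cancel hpne, Real.rpow_one]
    have e2 : ((p / (p - 1)) * K ^ (1 / p)) ^ p = (p / (p - 1)) ^ p * K := by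
      rw [Real.mul_rpow (by positivity) (Real.rpow_nonneg hK0 _),
        ← Real.rpow_mul hK0, one_div_mul_cancel hpne, Real.rpow_one]
    rw [e1, e2] at hfinal
    exact hfinal

theorem discrete_hardy_inequality
    (p : ℝ) (hp : 1 < p)
    (a : ℕ → ℝ) (ha : ∀ n, 0 ≤ a n)
    (hsum : Summable (fun n => a n ^ p))
    (hpos : 0 < ∑' n, a n ^ p)
    (A : ℕ → ℝ) (hA : ∀ n, A n = ∑ i ∈ Finset.range (n + 1), a i) :
    ∑' n : ℕ, ENNReal.ofReal ((A n / ((n : ℝ) + 1)) ^ p)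
      ≤ ENNReal.ofReal ((p / (p - 1)) ^ p * ∑' n, a n ^ p) := by
  have hAnonneg : ∀ n, 0 ≤ A n := fun n => by
    rw [hA]; exact Finset.sum_nonneg fun i _ => ha i
  have hα : ∀ n : ℕ, 0 ≤ A n / ((n : ℝ) + 1) := fun n =>
    div_nonneg (hAnonneg n) (by positivity)
  have hmul : ∀ n : ℕ, ((n : ℝ) + 1) * (A n / ((n : ℝ) + 1)) = A n := fun n => by
    have h : ((n : ℝ) + 1) ≠ 0 := by positivity
    field_simp
  have hrec : ∀ n : ℕ, a n = ((n : ℝ) + 1) * (A n / ((n : ℝ) + 1))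
      - (n : ℝ) * (A (n - 1) / (((n - 1 : ℕ) : ℝ) + 1)) := by
    intro n
    cases n with
    | zero =>
      simp only [Nat.cast_zero, zero_add, zero_mul, sub_zero, one_mul]
      rw [hA]
      simp
    | succ m =>
      rw [hmul (m + 1), Nat.add_sub_cancel]
      push_cast
      rw [hmul m, hA (m + 1), hA m, Finset.sum_range_succ]
      ring
  have haux := hardy_aux hp a ha hsum (fun n => A n / ((n : ℝ) + 1)) hα hrec
  rw [ENNReal.tsum_eq_iSup_nat]
  apply iSup_le
  intro N
  rw [← ENNReal.ofReal_sum_of_nonneg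
    (fun n _ => Real.rpow_nonneg (hα n) p)]
  exact ENNReal.ofReal_le_ofReal (haux N)
end

section
/- Let p > 1, 1/p + 1/q = 1, λ > 0, r, s > 0 with r + s = λ. Let k : (0,∞)² → (0,∞) be measurable and homogeneous of degree -λ with k_λ(r) = ∫₀^∞ k(u,1) u^{r-1} du finite and positive, and assume u ↦ k(u,1) u^{r-1} and u ↦ k(1,u) u^{s-1} are decreasing on (0,∞). Let (aₙ), (bₙ) be nonnegative sequences with 0 < ∑ aₙ^p < ∞ and 0 < ∑ bₙ^q < ∞, and Aₙ = a₁+⋯+aₙ, Bₙ = b₁+⋯+bₙ. Then ∑ₙ ∑ₘ m^{r - 1/q - 1} n^{s - 1/p - 1} k(m,n) Aₘ Bₙ ≤ p q k_λ(r) (∑ aₙ^p)^{1/p} (∑ bₙ^q)^{1/q}. -/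
open MeasureTheory Set
open scoped ENNReal NNReal

lemma myUnionIoc : (⋃ n : ℕ, Ioc (n:ℝ) (n+1)) = Ioi 0 := by
  ext x
  simp only [mem_iUnion, mem_Ioc, mem_Ioi]
  constructor
  · rintro ⟨n, hn, -⟩
    exact lt_of_le_of_lt (Nat.cast_nonneg n) hn
  · intro hx
    refine ⟨⌈x⌉₊ - 1, ?_, ?_⟩
    · have h1 : 1 ≤ ⌈x⌉₊ := Nat.one_le_ceil_iff.2 hx
      have := Nat.lt_ceil.1 (show ⌈x⌉₊ - 1 < ⌈x⌉₊ from Nat.sub_lt h1 one_pos)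
      exact this
    · have h1 : 1 ≤ ⌈x⌉₊ := Nat.one_le_ceil_iff.2 hx
      have : ((⌈x⌉₊ - 1 : ℕ) : ℝ) + 1 = (⌈x⌉₊ : ℝ) := by
        push_cast [Nat.cast_sub h1]; ring
      rw [this]
      exact Nat.le_ceil x

lemma tsum_ofReal_le_integral (f : ℝ → ℝ) (hmono : AntitoneOn f (Ioi 0))
    (hpos : ∀ x ∈ Ioi (0:ℝ), 0 ≤ f x) (hint : IntegrableOn f (Ioi 0)) :
    ∑' n : ℕ, ENNReal.ofReal (f ((n:ℝ)+1)) ≤ ENNReal.ofReal (∫ u in Ioi (0:ℝ), f u) := by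
  have hae : 0 ≤ᵐ[volume.restrict (Ioi (0:ℝ))] f :=
    (ae_restrict_iff' measurableSet_Ioi).2 (Filter.Eventually.of_forall hpos)
  rw [MeasureTheory.ofReal_integral_eq_lintegral_ofReal hint hae]
  have hdisj : Pairwise (Function.onFun Disjoint (fun n : ℕ => Ioc (n:ℝ) (n+1))) := by
    intro m n hmn
    rw [Function.onFun, Set.Ioc_disjoint_Ioc]
    rcases hmn.lt_or_gt with h | h
    · have : (m:ℝ) + 1 ≤ (n:ℝ) := by exact_mod_cast Nat.succ_le_of_lt h
      calc min ((m:ℝ)+1) ((n:ℝ)+1) ≤ (m:ℝ)+1 := min_le_left _ _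
        _ ≤ max (m:ℝ) (n:ℝ) := le_trans this (le_max_right _ _)
    · have : (n:ℝ) + 1 ≤ (m:ℝ) := by exact_mod_cast Nat.succ_le_of_lt h
      calc min ((m:ℝ)+1) ((n:ℝ)+1) ≤ (n:ℝ)+1 := min_le_right _ _
        _ ≤ max (m:ℝ) (n:ℝ) := le_trans this (le_max_left _ _)
  calc ∑' n : ℕ, ENNReal.ofReal (f ((n:ℝ)+1))
      ≤ ∑' n : ℕ, ∫⁻ x in Ioc (n:ℝ) (n+1), ENNReal.ofReal (f x) := by
        refine ENNReal.tsum_le_tsum fun n => ?_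
        have h1 : ∫⁻ _ in Ioc (n:ℝ) (n+1), ENNReal.ofReal (f ((n:ℝ)+1)) =
            ENNReal.ofReal (f ((n:ℝ)+1)) := by
          rw [setLIntegral_const, Real.volume_Ioc]
          simp
        rw [← h1]
        refine lintegral_mono_ae ((ae_restrict_iff' measurableSet_Ioc).2
          (Filter.Eventually.of_forall fun x hx => ?_))
        refine ENNReal.ofReal_le_ofReal (hmono ?_ ?_ hx.2)
        · exact lt_of_le_of_lt (Nat.cast_nonneg n) hx.1
        · exact mem_Ioi.2 (by positivity)
    _ = ∫⁻ x in ⋃ n : ℕ, Ioc (n:ℝ) (n+1), ENNReal.ofReal (f x) :=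
        (lintegral_iUnion (fun n => measurableSet_Ioc) hdisj _).symm
    _ = ∫⁻ x in Ioi (0:ℝ), ENNReal.ofReal (f x) := by rw [myUnionIoc]


lemma tsum_holder {ι : Type*} (f g : ι → ℝ≥0∞) {p q : ℝ} (hpq : Real.HolderConjugate p q) :
    ∑' i, f i * g i ≤ (∑' i, f i ^ p) ^ (1/p) * (∑' i, g i ^ q) ^ (1/q) := by
  rw [ENNReal.tsum_eq_iSup_sum]
  refine iSup_le fun s => ?_
  calc ∑ i ∈ s, f i * g i
      ≤ (∑ i ∈ s, f i ^ p) ^ (1/p) * (∑ i ∈ s, g i ^ q) ^ (1/q) :=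
        ENNReal.inner_le_Lp_mul_Lq s f g hpq
    _ ≤ (∑' i, f i ^ p) ^ (1/p) * (∑' i, g i ^ q) ^ (1/q) := by
        have h1 : (∑ i ∈ s, f i ^ p) ≤ ∑' i, f i ^ p := ENNReal.sum_le_tsum s
        have h2 : (∑ i ∈ s, g i ^ q) ≤ ∑' i, g i ^ q := ENNReal.sum_le_tsum s
        exact mul_le_mul' (ENNReal.rpow_le_rpow h1 (one_div_nonneg.2 hpq.pos.le))
          (ENNReal.rpow_le_rpow h2 (one_div_nonneg.2 hpq.symm.pos.le))

lemma scaled_bound {f : ℝ → ℝ} (hmono : AntitoneOn f (Ioi 0))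
    (hpos : ∀ x ∈ Ioi (0:ℝ), 0 ≤ f x) (hint : IntegrableOn f (Ioi 0))
    {I : ℝ} (hI : ∫ u in Ioi (0:ℝ), f u = I) (c e : ℝ) (hc : 0 < c)
    {F : ℝ → ℝ} (hF : ∀ u ∈ Ioi (0:ℝ), F u = c ^ e * f (c⁻¹ * u)) :
    ∑' n : ℕ, ENNReal.ofReal (F ((n:ℝ)+1)) ≤ ENNReal.ofReal (c ^ e * c * I) := by
  have hce : 0 < c ^ e := Real.rpow_pos_of_pos hc e
  set F' : ℝ → ℝ := fun u => c ^ e * f (c⁻¹ * u) with hF'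
  have hmem : ∀ u : ℝ, u ∈ Ioi (0:ℝ) → c⁻¹ * u ∈ Ioi (0:ℝ) := fun u hu => by
    have : 0 < c⁻¹ * u := mul_pos (inv_pos.2 hc) hu
    exact this
  have hmono' : AntitoneOn F' (Ioi 0) := by
    intro x hx y hy hxy
    have := hmono (hmem x hx) (hmem y hy) (by
      exact mul_le_mul_of_nonneg_left hxy (inv_pos.2 hc).le)
    exact mul_le_mul_of_nonneg_left this hce.le
  have hpos' : ∀ x ∈ Ioi (0:ℝ), 0 ≤ F' x := fun x hx =>
    mul_nonneg hce.le (hpos _ (hmem x hx))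
  have hint0 : IntegrableOn (fun u => f (c⁻¹ * u)) (Ioi 0) := by
    have := (integrableOn_Ioi_comp_mul_left_iff f 0 (inv_pos.2 hc)).2
    simpa [mul_zero] using this (by simpa [mul_zero] using hint)
  have hint' : IntegrableOn F' (Ioi 0) := hint0.const_mul _
  have hI' : ∫ u in Ioi (0:ℝ), F' u = c ^ e * c * I := by
    rw [hF']
    rw [MeasureTheory.integral_const_mul]
    have := integral_comp_mul_left_Ioi f 0 (inv_pos.2 hc)
    rw [mul_zero] at this
    rw [this, smul_eq_mul, inv_inv, hI]
    ring
  calc ∑' n : ℕ, ENNReal.ofReal (F ((n:ℝ)+1))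
      = ∑' n : ℕ, ENNReal.ofReal (F' ((n:ℝ)+1)) := by
        congr 1; funext n
        rw [hF ((n:ℝ)+1) (mem_Ioi.2 (by positivity))]
    _ ≤ ENNReal.ofReal (∫ u in Ioi (0:ℝ), F' u) :=
        tsum_ofReal_le_integral F' hmono' hpos' hint'
    _ = ENNReal.ofReal (c ^ e * c * I) := by rw [hI']


lemma rpow_split {x : ℝ} (hx : 0 ≤ x) {p : ℝ} (hp : 1 ≤ p) :
    x * x ^ (p - 1) = x ^ p := by
  rcases eq_or_lt_of_le hx with h | h
  · rcases eq_or_lt_of_le hp with h1 | h1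
    · rw [← h, ← h1]; norm_num
    · rw [← h, Real.zero_rpow (by positivity : p ≠ 0),
        Real.zero_rpow (by intro hc; rw [sub_eq_zero] at hc; exact absurd hc.symm (ne_of_lt h1))]
      ring
  · nth_rewrite 1 [← Real.rpow_one x]
    rw [← Real.rpow_add h]
    norm_num

lemma hardy_ineq (p q : ℝ) (hp : 1 < p) (hpq : 1 / p + 1 / q = 1)
    (a : ℕ → ℝ) (ha : ∀ n, 0 ≤ a n) (ha_sum : Summable fun n => a n ^ p) :
    ∑' m : ℕ, ENNReal.ofReal (((∑ i ∈ Finset.range (m+1), a i) / ((m:ℝ)+1)) ^ p)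
      ≤ ENNReal.ofReal (q ^ p * ∑' n, a n ^ p) := by
  have hconj : Real.HolderConjugate p q := Real.holderConjugate_iff.2 ⟨hp, by rw [← one_div, ← one_div]; exact hpq⟩
  have hp0 : 0 < p := hconj.pos
  have hq1 : 1 < q := hconj.symm.lt
  have hq0 : 0 < q := hconj.symm.pos
  have hmul : p * q = p + q := hconj.mul_eq_add
  have hpm1q : (p - 1) * q = p := hconj.sub_one_mul_conj
  set α : ℕ → ℝ := fun m => (∑ i ∈ Finset.range (m+1), a i) / ((m:ℝ)+1) with hα
  have hα0 : ∀ m, 0 ≤ α m := fun m =>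
    div_nonneg (Finset.sum_nonneg fun i _ => ha i) (by positivity)
  have hAα : ∀ m : ℕ, α m * ((m:ℝ)+1) = ∑ i ∈ Finset.range (m+1), a i := fun m =>
    div_mul_cancel₀ _ (by positivity)
  -- per-term Young estimate for the induction step
  have young : ∀ m : ℕ, α m * α (m+1) ^ (p-1) ≤ α m ^ p / p + α (m+1) ^ p / q := by
    intro m
    have h := Real.young_inequality_of_nonneg (hα0 m)
      (Real.rpow_nonneg (hα0 (m+1)) (p-1)) hconj
    have : (α (m+1) ^ (p-1)) ^ q = α (m+1) ^ p := by
      rw [← Real.rpow_mul (hα0 (m+1)), hpm1q]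
    rwa [this] at h
  -- telescoping claim
  have claim : ∀ N : ℕ, ∑ m ∈ Finset.range (N+1), (α m ^ p - q * a m * α m ^ (p-1))
      ≤ -((q/p) * ((N:ℝ)+1) * α N ^ p) := by
    intro N
    induction N with
    | zero =>
      have ha0 : a 0 = α 0 := by simp [hα]
      have hsplit : α 0 * α 0 ^ (p-1) = α 0 ^ p := rpow_split (hα0 0) hp.le
      rw [Finset.sum_range_one, ha0]
      have h1q : 1 - q = -(q/p) := by
        field_simp
        linarith [hmul]
      nlinarith [hsplit, Real.rpow_nonneg (hα0 0) p]
    | succ N ih =>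
      rw [Finset.sum_range_succ]
      have key : α (N+1) ^ p - q * a (N+1) * α (N+1) ^ (p-1)
          ≤ (q/p) * (((N:ℝ)+1) * α N ^ p - ((N:ℝ)+2) * α (N+1) ^ p) := by
        have haN : a (N+1) = ((N:ℝ)+2) * α (N+1) - ((N:ℝ)+1) * α N := by
          have h1 := hAα (N+1)
          have h2 := hAα N
          have h3 : (∑ i ∈ Finset.range (N+2), a i)
              = (∑ i ∈ Finset.range (N+1), a i) + a (N+1) := Finset.sum_range_succ _ _
          push_cast at h1 h2 h3 ⊢
          nlinarith [h1, h2, h3]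
        have hy := young N
        have hsplit : α (N+1) * α (N+1) ^ (p-1) = α (N+1) ^ p := rpow_split (hα0 (N+1)) hp.le
        have hyq : q * ((N:ℝ)+1) * (α N * α (N+1) ^ (p-1))
            ≤ q/p * ((N:ℝ)+1) * α N ^ p + ((N:ℝ)+1) * α (N+1) ^ p := by
          have h0 : q * ((N:ℝ)+1) * (α N * α (N+1) ^ (p-1))
              ≤ q * ((N:ℝ)+1) * (α N ^ p / p + α (N+1) ^ p / q) :=
            mul_le_mul_of_nonneg_left hy (by positivity)
          have h1 : q * ((N:ℝ)+1) * (α N ^ p / p + α (N+1) ^ p / q)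
              = q/p * ((N:ℝ)+1) * α N ^ p + ((N:ℝ)+1) * α (N+1) ^ p := by
            field_simp
          linarith [h0, h1.symm.le, h1.le]
        rw [haN]
        have hcoef : 1 + ((N:ℝ)+1) - q * ((N:ℝ)+2) = -(q/p) * ((N:ℝ)+2) := by
          field_simp
          nlinarith [hmul]
        have hcoefX : (1 + ((N:ℝ)+1) - q * ((N:ℝ)+2)) * α (N+1) ^ p
            = (-(q/p) * ((N:ℝ)+2)) * α (N+1) ^ p := by rw [hcoef]
        have h2 : q * ((N:ℝ)+2) * (α (N+1) * α (N+1) ^ (p-1))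
            = q * ((N:ℝ)+2) * α (N+1) ^ p := by rw [hsplit]
        nlinarith [hyq, hcoefX, h2]
      have hnn : 0 ≤ (q/p) * ((N:ℝ)+1) * α N ^ p := by
        have := Real.rpow_nonneg (hα0 N) p
        positivity
      push_cast
      push_cast at ih key
      linarith [ih, key]
  set T : ℝ := ∑' n, a n ^ p with hT
  have hT0 : 0 ≤ T := tsum_nonneg fun n => Real.rpow_nonneg (ha n) p
  have claim2 : ∀ N : ℕ, ∑ m ∈ Finset.range N, α m ^ p
      ≤ q * ∑ m ∈ Finset.range N, a m * α m ^ (p-1) := by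
    intro N
    cases N with
    | zero => simp
    | succ N =>
      have h := claim N
      rw [Finset.sum_sub_distrib] at h
      have hnn : 0 ≤ (q/p) * ((N:ℝ)+1) * α N ^ p := by
        have := Real.rpow_nonneg (hα0 N) p
        positivity
      rw [Finset.mul_sum]
      calc ∑ m ∈ Finset.range (N+1), α m ^ p
          ≤ ∑ m ∈ Finset.range (N+1), q * a m * α m ^ (p-1) := by linarith [h, hnn]
        _ = ∑ m ∈ Finset.range (N+1), q * (a m * α m ^ (p-1)) := by
            refine Finset.sum_congr rfl fun m _ => by ring
  have claim3 : ∀ N : ℕ, ∑ m ∈ Finset.range N, α m ^ p ≤ q ^ p * T := by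
    intro N
    set S : ℝ := ∑ m ∈ Finset.range N, α m ^ p with hS
    have hS0 : 0 ≤ S := Finset.sum_nonneg fun m _ => Real.rpow_nonneg (hα0 m) p
    have hTle : ∑ m ∈ Finset.range N, a m ^ p ≤ T :=
      Summable.sum_le_tsum _ (fun i _ => Real.rpow_nonneg (ha i) p) ha_sum
    have hhold : ∑ m ∈ Finset.range N, a m * α m ^ (p-1)
        ≤ (∑ m ∈ Finset.range N, a m ^ p) ^ (1/p) * S ^ (1/q) := by
      have h := Real.inner_le_Lp_mul_Lq_of_nonneg (s := Finset.range N)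
        (f := a) (g := fun m => α m ^ (p-1)) hconj
        (fun i _ => ha i) (fun i _ => Real.rpow_nonneg (hα0 i) (p-1))
      have heq : ∑ m ∈ Finset.range N, (α m ^ (p-1)) ^ q = S := by
        refine Finset.sum_congr rfl fun m _ => ?_
        rw [← Real.rpow_mul (hα0 m), hpm1q]
      rwa [heq] at h
    have hstep : S ≤ q * (T ^ (1/p) * S ^ (1/q)) := by
      have h1 : (∑ m ∈ Finset.range N, a m ^ p) ^ (1/p) ≤ T ^ (1/p) :=
        Real.rpow_le_rpow (Finset.sum_nonneg fun i _ => Real.rpow_nonneg (ha i) p)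
          hTle (by positivity)
      have h2 : S ≤ q * ((∑ m ∈ Finset.range N, a m ^ p) ^ (1/p) * S ^ (1/q)) := by
        calc S ≤ q * ∑ m ∈ Finset.range N, a m * α m ^ (p-1) := claim2 N
          _ ≤ q * ((∑ m ∈ Finset.range N, a m ^ p) ^ (1/p) * S ^ (1/q)) :=
            mul_le_mul_of_nonneg_left hhold hq0.le
      refine le_trans h2 (mul_le_mul_of_nonneg_left
        (mul_le_mul_of_nonneg_right h1 (Real.rpow_nonneg hS0 _)) hq0.le)
    rcases eq_or_lt_of_le hS0 with h0 | h0
    · rw [← h0]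
      have : 0 ≤ q ^ p := Real.rpow_nonneg hq0.le p
      positivity
    · have hsplit : S ^ (1/p) * S ^ (1/q) = S := by
        rw [← Real.rpow_add h0, hpq, Real.rpow_one]
      have hcancel : S ^ (1/p) ≤ q * T ^ (1/p) := by
        have hq' : 0 < S ^ (1/q) := Real.rpow_pos_of_pos h0 _
        have : S ^ (1/p) * S ^ (1/q) ≤ q * T ^ (1/p) * S ^ (1/q) := by
          rw [hsplit]; linarith [hstep]
        exact le_of_mul_le_mul_right this hq'
      have hfin : (S ^ (1/p)) ^ p ≤ (q * T ^ (1/p)) ^ p :=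
        Real.rpow_le_rpow (Real.rpow_nonneg hS0 _) hcancel hp0.le
      have hSp : (S ^ (1/p)) ^ p = S := by
        rw [← Real.rpow_mul hS0, one_div_mul_cancel hp0.ne', Real.rpow_one]
      have hTp : (q * T ^ (1/p)) ^ p = q ^ p * T := by
        rw [Real.mul_rpow hq0.le (Real.rpow_nonneg hT0 _), ← Real.rpow_mul hT0,
          one_div_mul_cancel hp0.ne', Real.rpow_one]
      rw [hSp, hTp] at hfin
      exact hfin
  rw [ENNReal.tsum_eq_iSup_sum]
  refine iSup_le fun s => ?_
  obtain ⟨N, hsub⟩ := s.exists_nat_subset_range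
  calc ∑ m ∈ s, ENNReal.ofReal (α m ^ p)
      = ENNReal.ofReal (∑ m ∈ s, α m ^ p) :=
        (ENNReal.ofReal_sum_of_nonneg fun m _ => Real.rpow_nonneg (hα0 m) p).symm
    _ ≤ ENNReal.ofReal (q ^ p * T) := by
        refine ENNReal.ofReal_le_ofReal (le_trans ?_ (claim3 N))
        exact Finset.sum_le_sum_of_subset_of_nonneg hsub
          fun m _ _ => Real.rpow_nonneg (hα0 m) p


section
variable {lam r s : ℝ} {k : ℝ → ℝ → ℝ} {kr : ℝ}

lemma inv_kernel_eq (hr : 0 < r) (hs : 0 < s) (hrs : r + s = lam)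
    (hk_hom : ∀ u x y : ℝ, 0 < u → 0 < x → 0 < y →
      k (u * x) (u * y) = u ^ (-lam) * k x y) :
    ∀ x ∈ Ioi (0:ℝ), (|(-1:ℝ)| * x ^ ((-1:ℝ)-1)) • ((fun u => k u 1 * u ^ (r-1)) (x ^ (-1:ℝ)))
      = k 1 x * x ^ (s-1) := by
  intro x hx
  have hx0 : (0:ℝ) < x := hx
  have hxi : (0:ℝ) < x⁻¹ := inv_pos.2 hx0
  rw [Real.rpow_neg_one]
  have hk1 : k x⁻¹ 1 = x ^ lam * k 1 x := by
    have h := hk_hom x⁻¹ 1 x hxi one_pos hx0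
    rw [mul_one, inv_mul_cancel₀ hx0.ne'] at h
    rw [h, Real.inv_rpow hx0.le, Real.rpow_neg hx0.le, inv_inv]
  have hpow : (x⁻¹) ^ (r-1) = x ^ (1-r) := by
    rw [Real.inv_rpow hx0.le, ← Real.rpow_neg hx0.le]
    norm_num
  simp only [smul_eq_mul, abs_neg, abs_one]
  rw [hk1, hpow]
  rw [show ((-1:ℝ)-1) = (-2:ℝ) by norm_num]
  have hcomb : x ^ (-2:ℝ) * (x ^ lam * k 1 x * x ^ (1-r)) = k 1 x * x ^ ((-2) + lam + (1-r)) := by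
    rw [Real.rpow_add hx0, Real.rpow_add hx0]
    ring
  rw [one_mul, hcomb, show ((-2:ℝ)) + lam + (1-r) = s - 1 by linarith]

lemma g_integrable (hr : 0 < r) (hs : 0 < s) (hrs : r + s = lam)
    (hk_hom : ∀ u x y : ℝ, 0 < u → 0 < x → 0 < y →
      k (u * x) (u * y) = u ^ (-lam) * k x y)
    (hkr_int : IntegrableOn (fun u => k u 1 * u ^ (r - 1)) (Ioi (0:ℝ))) :
    IntegrableOn (fun u => k 1 u * u ^ (s - 1)) (Ioi (0:ℝ)) := by
  have h := (integrableOn_Ioi_comp_rpow_iff (fun u => k u 1 * u ^ (r-1))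
    (show (-1:ℝ) ≠ 0 by norm_num)).2 hkr_int
  exact h.congr_fun (inv_kernel_eq hr hs hrs hk_hom) measurableSet_Ioi

lemma g_integral (hr : 0 < r) (hs : 0 < s) (hrs : r + s = lam)
    (hk_hom : ∀ u x y : ℝ, 0 < u → 0 < x → 0 < y →
      k (u * x) (u * y) = u ^ (-lam) * k x y)
    (hkr : kr = ∫ u in Ioi (0:ℝ), k u 1 * u ^ (r - 1)) :
    ∫ u in Ioi (0:ℝ), k 1 u * u ^ (s - 1) = kr := by
  calc ∫ u in Ioi (0:ℝ), k 1 u * u ^ (s - 1)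
      = ∫ x in Ioi (0:ℝ), (|(-1:ℝ)| * x ^ ((-1:ℝ)-1)) •
          ((fun u => k u 1 * u ^ (r-1)) (x ^ (-1:ℝ))) :=
        (setIntegral_congr_fun measurableSet_Ioi (inv_kernel_eq hr hs hrs hk_hom)).symm
    _ = ∫ u in Ioi (0:ℝ), k u 1 * u ^ (r - 1) :=
        integral_comp_rpow_Ioi (fun u => k u 1 * u ^ (r - 1)) (show (-1:ℝ) ≠ 0 by norm_num)
    _ = kr := hkr.symm
end

section
variable {lam r s : ℝ} {k : ℝ → ℝ → ℝ} {kr : ℝ}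

lemma kernel_sum₁ (hr : 0 < r) (hs : 0 < s) (hrs : r + s = lam)
    (hk_pos : ∀ x y : ℝ, 0 < x → 0 < y → 0 < k x y)
    (hk_hom : ∀ u x y : ℝ, 0 < u → 0 < x → 0 < y →
      k (u * x) (u * y) = u ^ (-lam) * k x y)
    (hkr_int : IntegrableOn (fun u => k u 1 * u ^ (r - 1)) (Ioi (0:ℝ)))
    (hkr : kr = ∫ u in Ioi (0:ℝ), k u 1 * u ^ (r - 1))
    (hk_dec₁ : AntitoneOn (fun u => k u 1 * u ^ (r - 1)) (Ioi (0:ℝ)))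
    {c : ℝ} (hc : 0 < c) :
    ∑' m : ℕ, ENNReal.ofReal (k ((m:ℝ)+1) c * ((m:ℝ)+1) ^ (r-1))
      ≤ ENNReal.ofReal (kr * c ^ (-s)) := by
  have hfpos : ∀ x ∈ Ioi (0:ℝ), 0 ≤ k x 1 * x ^ (r-1) := fun x hx =>
    mul_nonneg (hk_pos x 1 hx one_pos).le (Real.rpow_nonneg (le_of_lt hx) _)
  have hF : ∀ u ∈ Ioi (0:ℝ), k u c * u ^ (r-1)
      = c ^ (-(s+1)) * ((fun v => k v 1 * v ^ (r-1)) (c⁻¹ * u)) := by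
    intro u hu
    have hu0 : (0:ℝ) < u := hu
    have hciu : 0 < c⁻¹ * u := by positivity
    have h1 : k u c = c ^ (-lam) * k (c⁻¹*u) 1 := by
      have h := hk_hom c (c⁻¹*u) 1 hc hciu one_pos
      rwa [mul_inv_cancel_left₀ hc.ne', mul_one] at h
    have h2 : u ^ (r-1) = c ^ (r-1) * (c⁻¹*u) ^ (r-1) := by
      rw [← Real.mul_rpow hc.le hciu.le, mul_inv_cancel_left₀ hc.ne']
    have h3 : c ^ (-lam) * c ^ (r-1) = c ^ (-(s+1)) := by
      rw [← Real.rpow_add hc]; congr 1; linarith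
    calc k u c * u ^ (r-1)
        = (c ^ (-lam) * c ^ (r-1)) * (k (c⁻¹*u) 1 * (c⁻¹*u) ^ (r-1)) := by
          rw [h1, h2]; ring
      _ = c ^ (-(s+1)) * (k (c⁻¹*u) 1 * (c⁻¹*u) ^ (r-1)) := by rw [h3]
  have h := scaled_bound hk_dec₁ hfpos hkr_int hkr.symm c (-(s+1)) hc
    (F := fun u => k u c * u ^ (r-1)) hF
  have heq : c ^ (-(s+1)) * c * kr = kr * c ^ (-s) := by
    have : c ^ (-(s+1)) * c = c ^ (-s) := by
      nth_rewrite 2 [← Real.rpow_one c]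
      rw [← Real.rpow_add hc]; congr 1; ring
    rw [this]; ring
  rw [heq] at h
  exact h

lemma kernel_sum₂ (hr : 0 < r) (hs : 0 < s) (hrs : r + s = lam)
    (hk_pos : ∀ x y : ℝ, 0 < x → 0 < y → 0 < k x y)
    (hk_hom : ∀ u x y : ℝ, 0 < u → 0 < x → 0 < y →
      k (u * x) (u * y) = u ^ (-lam) * k x y)
    (hkr_int : IntegrableOn (fun u => k u 1 * u ^ (r - 1)) (Ioi (0:ℝ)))
    (hkr : kr = ∫ u in Ioi (0:ℝ), k u 1 * u ^ (r - 1))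
    (hk_dec₂ : AntitoneOn (fun u => k 1 u * u ^ (s - 1)) (Ioi (0:ℝ)))
    {c : ℝ} (hc : 0 < c) :
    ∑' n : ℕ, ENNReal.ofReal (k c ((n:ℝ)+1) * ((n:ℝ)+1) ^ (s-1))
      ≤ ENNReal.ofReal (kr * c ^ (-r)) := by
  have hgpos : ∀ x ∈ Ioi (0:ℝ), 0 ≤ k 1 x * x ^ (s-1) := fun x hx =>
    mul_nonneg (hk_pos 1 x one_pos hx).le (Real.rpow_nonneg (le_of_lt hx) _)
  have hgint := g_integrable hr hs hrs hk_hom hkr_int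
  have hgI := g_integral hr hs hrs hk_hom hkr
  have hF : ∀ u ∈ Ioi (0:ℝ), k c u * u ^ (s-1)
      = c ^ (-(r+1)) * ((fun v => k 1 v * v ^ (s-1)) (c⁻¹ * u)) := by
    intro u hu
    have hu0 : (0:ℝ) < u := hu
    have hciu : 0 < c⁻¹ * u := by positivity
    have h1 : k c u = c ^ (-lam) * k 1 (c⁻¹*u) := by
      have h := hk_hom c 1 (c⁻¹*u) hc one_pos hciu
      rwa [mul_inv_cancel_left₀ hc.ne', mul_one] at h
    have h2 : u ^ (s-1) = c ^ (s-1) * (c⁻¹*u) ^ (s-1) := by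
      rw [← Real.mul_rpow hc.le hciu.le, mul_inv_cancel_left₀ hc.ne']
    have h3 : c ^ (-lam) * c ^ (s-1) = c ^ (-(r+1)) := by
      rw [← Real.rpow_add hc]; congr 1; linarith
    calc k c u * u ^ (s-1)
        = (c ^ (-lam) * c ^ (s-1)) * (k 1 (c⁻¹*u) * (c⁻¹*u) ^ (s-1)) := by
          rw [h1, h2]; ring
      _ = c ^ (-(r+1)) * (k 1 (c⁻¹*u) * (c⁻¹*u) ^ (s-1)) := by rw [h3]
  have h := scaled_bound hk_dec₂ hgpos hgint hgI c (-(r+1)) hc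
    (F := fun u => k c u * u ^ (s-1)) hF
  have heq : c ^ (-(r+1)) * c * kr = kr * c ^ (-r) := by
    have : c ^ (-(r+1)) * c = c ^ (-r) := by
      nth_rewrite 2 [← Real.rpow_one c]
      rw [← Real.rpow_add hc]; congr 1; ring
    rw [this]; ring
  rw [heq] at h
  exact h
end

lemma expand_rpow {K u v : ℝ} (hK : 0 < K) (hu : 0 < u) (hv : 0 < v) (a b e : ℝ) :
    (K * u ^ a * v ^ b) ^ e = K ^ e * u ^ (a*e) * v ^ (b*e) := by
  rw [Real.mul_rpow (by positivity) (by positivity), Real.mul_rpow hK.le (by positivity),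
    Real.rpow_mul hu.le, Real.rpow_mul hv.le]

set_option maxHeartbeats 2000000 in
theorem discrete_hardy_hilbert_general_kernel
    (p q lam r s : ℝ) (hp : 1 < p) (hpq : 1 / p + 1 / q = 1)
    (hlam : 0 < lam) (hr : 0 < r) (hs : 0 < s) (hrs : r + s = lam)
    (k : ℝ → ℝ → ℝ)
    (hk_meas : Measurable (Function.uncurry k))
    (hk_pos : ∀ x y : ℝ, 0 < x → 0 < y → 0 < k x y)
    (hk_hom : ∀ u x y : ℝ, 0 < u → 0 < x → 0 < y →
      k (u * x) (u * y) = u ^ (-lam) * k x y)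
    (kr : ℝ) (hkr_pos : 0 < kr)
    (hkr_int : IntegrableOn (fun u => k u 1 * u ^ (r - 1)) (Ioi (0:ℝ)))
    (hkr : kr = ∫ u in Ioi (0:ℝ), k u 1 * u ^ (r - 1))
    (hk_dec₁ : AntitoneOn (fun u => k u 1 * u ^ (r - 1)) (Ioi (0:ℝ)))
    (hk_dec₂ : AntitoneOn (fun u => k 1 u * u ^ (s - 1)) (Ioi (0:ℝ)))
    (a b : ℕ → ℝ) (ha : ∀ n, 0 ≤ a n) (hb : ∀ n, 0 ≤ b n)
    (ha_sum : Summable (fun n => a n ^ p)) (hb_sum : Summable (fun n => b n ^ q))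
    (ha_pos : 0 < ∑' n, a n ^ p) (hb_pos : 0 < ∑' n, b n ^ q)
    (A B : ℕ → ℝ)
    (hA : ∀ n, A n = ∑ i ∈ Finset.range (n + 1), a i)
    (hB : ∀ n, B n = ∑ i ∈ Finset.range (n + 1), b i) :
    ∑' n : ℕ, ∑' m : ℕ,
        ENNReal.ofReal (((m : ℝ) + 1) ^ (r - 1 / q - 1) * ((n : ℝ) + 1) ^ (s - 1 / p - 1) *
          k ((m : ℝ) + 1) ((n : ℝ) + 1) * A m * B n)
      ≤ ENNReal.ofReal (p * q * kr *
          (∑' n, a n ^ p) ^ (1 / p) * (∑' n, b n ^ q) ^ (1 / q)) := by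
  have hconj : Real.HolderConjugate p q := Real.holderConjugate_iff.2 ⟨hp, by rw [← one_div, ← one_div]; exact hpq⟩
  have hp0 : 0 < p := hconj.pos
  have hq1 : 1 < q := hconj.symm.lt
  have hq0 : 0 < q := hconj.symm.pos
  have hmul : p * q = p + q := hconj.mul_eq_add
  have hA0 : ∀ m, 0 ≤ A m := fun m => by
    rw [hA]; exact Finset.sum_nonneg fun i _ => ha i
  have hB0 : ∀ n, 0 ≤ B n := fun n => by
    rw [hB]; exact Finset.sum_nonneg fun i _ => hb i
  set T₁ : ℝ := ∑' n, a n ^ p with hT₁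
  set T₂ : ℝ := ∑' n, b n ^ q with hT₂
  have hT₁0 : 0 ≤ T₁ := ha_pos.le
  have hT₂0 : 0 ≤ T₂ := hb_pos.le
  set X : ℕ × ℕ → ℝ := fun z =>
    (k ((z.1:ℝ)+1) ((z.2:ℝ)+1) * ((z.2:ℝ)+1) ^ (s-1) * ((z.1:ℝ)+1) ^ ((1-r)*(p-1))) ^ (1/p)
      * (((z.1:ℝ)+1) ^ (r - 1/q - 1) * A z.1) with hX
  set Y : ℕ × ℕ → ℝ := fun z =>
    (k ((z.1:ℝ)+1) ((z.2:ℝ)+1) * ((z.1:ℝ)+1) ^ (r-1) * ((z.2:ℝ)+1) ^ ((1-s)*(q-1))) ^ (1/q)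
      * (((z.2:ℝ)+1) ^ (s - 1/p - 1) * B z.2) with hY
  have hX0 : ∀ z, 0 ≤ X z := fun z => by
    have := hk_pos ((z.1:ℝ)+1) ((z.2:ℝ)+1) (by positivity) (by positivity)
    have h2 := hA0 z.1
    rw [hX]
    positivity
  have hY0 : ∀ z, 0 ≤ Y z := fun z => by
    have := hk_pos ((z.1:ℝ)+1) ((z.2:ℝ)+1) (by positivity) (by positivity)
    have h2 := hB0 z.2
    rw [hY]
    positivity
  -- factorization of each term
  have hfact : ∀ m n : ℕ,
      ((m : ℝ) + 1) ^ (r - 1 / q - 1) * ((n : ℝ) + 1) ^ (s - 1 / p - 1) *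
        k ((m : ℝ) + 1) ((n : ℝ) + 1) * A m * B n = X (m,n) * Y (m,n) := by
    intro m n
    set em : ℝ := (m:ℝ)+1 with hem'
    set en : ℝ := (n:ℝ)+1 with hen'
    have hem : (0:ℝ) < em := by positivity
    have hen : (0:ℝ) < en := by positivity
    have hK : 0 < k em en := hk_pos _ _ hem hen
    rw [hX, hY]
    simp only
    rw [expand_rpow hK hen hem (s-1) ((1-r)*(p-1)) (1/p),
      expand_rpow hK hem hen (r-1) ((1-s)*(q-1)) (1/q)]
    have hKsplit : (k em en) ^ (1/p) * (k em en) ^ (1/q) = k em en := by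
      rw [← Real.rpow_add hK, hpq, Real.rpow_one]
    have hue : em ^ ((1-r)*(p-1)*(1/p)) * em ^ ((r-1)*(1/q)) = 1 := by
      rw [← Real.rpow_add hem,
        show (1-r)*(p-1)*(1/p) + (r-1)*(1/q) = 0 by
          field_simp
          nlinarith [hmul]]
      exact Real.rpow_zero _
    have hve : en ^ ((s-1)*(1/p)) * en ^ ((1-s)*(q-1)*(1/q)) = 1 := by
      rw [← Real.rpow_add hen,
        show (s-1)*(1/p) + (1-s)*(q-1)*(1/q) = 0 by
          field_simp
          nlinarith [hmul]]
      exact Real.rpow_zero _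
    calc em ^ (r - 1/q - 1) * en ^ (s - 1/p - 1) * k em en * A m * B n
        = ((k em en) ^ (1/p) * (k em en) ^ (1/q))
          * (em ^ ((1-r)*(p-1)*(1/p)) * em ^ ((r-1)*(1/q)))
          * (en ^ ((s-1)*(1/p)) * en ^ ((1-s)*(q-1)*(1/q)))
          * (em ^ (r - 1/q - 1) * A m) * (en ^ (s - 1/p - 1) * B n) := by
          rw [hKsplit, hue, hve]; ring
      _ = (k em en) ^ (1/p) * en ^ ((s-1)*(1/p)) * em ^ ((1-r)*(p-1)*(1/p))
          * (em ^ (r - 1/q - 1) * A m)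
          * ((k em en) ^ (1/q) * em ^ ((r-1)*(1/q)) * en ^ ((1-s)*(q-1)*(1/q))
          * (en ^ (s - 1/p - 1) * B n)) := by ring
  have hterm : ∀ m n : ℕ, ENNReal.ofReal
      (((m : ℝ) + 1) ^ (r - 1 / q - 1) * ((n : ℝ) + 1) ^ (s - 1 / p - 1) *
        k ((m : ℝ) + 1) ((n : ℝ) + 1) * A m * B n)
      = ENNReal.ofReal (X (m,n)) * ENNReal.ofReal (Y (m,n)) := fun m n => by
    rw [hfact m n, ENNReal.ofReal_mul (hX0 _)]
  -- step 1: rewrite LHS as a sum over pairs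
  have hLHS : ∑' n : ℕ, ∑' m : ℕ,
      ENNReal.ofReal (((m : ℝ) + 1) ^ (r - 1 / q - 1) * ((n : ℝ) + 1) ^ (s - 1 / p - 1) *
        k ((m : ℝ) + 1) ((n : ℝ) + 1) * A m * B n)
      = ∑' z : ℕ × ℕ, ENNReal.ofReal (X z) * ENNReal.ofReal (Y z) := by
    calc ∑' n : ℕ, ∑' m : ℕ,
        ENNReal.ofReal (((m : ℝ) + 1) ^ (r - 1 / q - 1) * ((n : ℝ) + 1) ^ (s - 1 / p - 1) *
          k ((m : ℝ) + 1) ((n : ℝ) + 1) * A m * B n)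
        = ∑' m : ℕ, ∑' n : ℕ,
          ENNReal.ofReal (((m : ℝ) + 1) ^ (r - 1 / q - 1) * ((n : ℝ) + 1) ^ (s - 1 / p - 1) *
            k ((m : ℝ) + 1) ((n : ℝ) + 1) * A m * B n) := ENNReal.tsum_comm
      _ = ∑' m : ℕ, ∑' n : ℕ, ENNReal.ofReal (X (m,n)) * ENNReal.ofReal (Y (m,n)) := by
          congr 1; funext m; congr 1; funext n; exact hterm m n
      _ = ∑' z : ℕ × ℕ, ENNReal.ofReal (X z) * ENNReal.ofReal (Y z) :=
          (ENNReal.tsum_prod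
            (f := fun m n => ENNReal.ofReal (X (m,n)) * ENNReal.ofReal (Y (m,n)))).symm
  rw [hLHS]
  -- step 2: Hoelder
  have hHolder := tsum_holder (fun z => ENNReal.ofReal (X z)) (fun z => ENNReal.ofReal (Y z)) hconj
  -- step 3: bound on the X-sum
  set Dm : ℝ := (1-r)*(p-1) + (r - 1/q - 1)*p with hDm
  have hXp : ∀ z : ℕ × ℕ, (ENNReal.ofReal (X z)) ^ p
      = ENNReal.ofReal (k ((z.1:ℝ)+1) ((z.2:ℝ)+1) * ((z.2:ℝ)+1) ^ (s-1))
        * ENNReal.ofReal (((z.1:ℝ)+1) ^ Dm * A z.1 ^ p) := by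
    intro z
    set em : ℝ := (z.1:ℝ)+1
    set en : ℝ := (z.2:ℝ)+1
    have hem : (0:ℝ) < em := by positivity
    have hen : (0:ℝ) < en := by positivity
    have hK : 0 < k em en := hk_pos _ _ hem hen
    have hW : (0:ℝ) < k em en * en ^ (s-1) * em ^ ((1-r)*(p-1)) := by positivity
    have hXzp : X z ^ p = (k em en * en ^ (s-1)) * (em ^ Dm * A z.1 ^ p) := by
      rw [hX]
      simp only
      rw [Real.mul_rpow (Real.rpow_nonneg hW.le _)
        (mul_nonneg (Real.rpow_nonneg hem.le _) (hA0 z.1)),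
        ← Real.rpow_mul hW.le, one_div_mul_cancel hp0.ne', Real.rpow_one,
        Real.mul_rpow (Real.rpow_nonneg hem.le _) (hA0 z.1),
        ← Real.rpow_mul hem.le]
      rw [hDm]
      rw [show ((1-r)*(p-1) + (r - 1/q - 1)*p) = (1-r)*(p-1) + ((r - 1/q - 1)*p) from rfl,
        Real.rpow_add hem]
      ring
    rw [ENNReal.ofReal_rpow_of_nonneg (hX0 z) hp0.le, hXzp,
      ENNReal.ofReal_mul (by positivity)]
  have hPbound : ∑' z : ℕ × ℕ, (ENNReal.ofReal (X z)) ^ p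
      ≤ ENNReal.ofReal kr * ENNReal.ofReal (q ^ p * T₁) := by
    calc ∑' z : ℕ × ℕ, (ENNReal.ofReal (X z)) ^ p
        = ∑' m : ℕ, ∑' n : ℕ, (ENNReal.ofReal (X (m,n))) ^ p :=
          ENNReal.tsum_prod (f := fun m n => (ENNReal.ofReal (X (m,n))) ^ p)
      _ = ∑' m : ℕ, ENNReal.ofReal (((m:ℝ)+1) ^ Dm * A m ^ p)
            * ∑' n : ℕ, ENNReal.ofReal (k ((m:ℝ)+1) ((n:ℝ)+1) * ((n:ℝ)+1) ^ (s-1)) := by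
          congr 1; funext m
          rw [← ENNReal.tsum_mul_left]
          congr 1; funext n
          rw [hXp (m,n)]
          ring
      _ ≤ ∑' m : ℕ, ENNReal.ofReal (((m:ℝ)+1) ^ Dm * A m ^ p)
            * ENNReal.ofReal (kr * ((m:ℝ)+1) ^ (-r)) := by
          refine ENNReal.tsum_le_tsum fun m => ?_
          exact mul_le_mul_right
            (kernel_sum₂ hr hs hrs hk_pos hk_hom hkr_int hkr hk_dec₂
              (by positivity : (0:ℝ) < (m:ℝ)+1)) _
      _ = ∑' m : ℕ, ENNReal.ofReal kr * ENNReal.ofReal ((A m / ((m:ℝ)+1)) ^ p) := by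
          congr 1; funext m
          set em : ℝ := (m:ℝ)+1
          have hem : (0:ℝ) < em := by positivity
          rw [← ENNReal.ofReal_mul
            (mul_nonneg (Real.rpow_nonneg hem.le _) (Real.rpow_nonneg (hA0 m) _)),
            ← ENNReal.ofReal_mul hkr_pos.le]
          congr 1
          have hDr : em ^ Dm * em ^ (-r) = em ^ (-p) := by
            rw [← Real.rpow_add hem]
            congr 1
            rw [hDm]
            field_simp
            nlinarith [hmul]
          have hdiv : (A m / em) ^ p = A m ^ p * em ^ (-p) := by
            rw [Real.div_rpow (hA0 m) hem.le, Real.rpow_neg hem.le, div_eq_mul_inv]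
          rw [hdiv]
          calc em ^ Dm * A m ^ p * (kr * em ^ (-r))
              = kr * (A m ^ p * (em ^ Dm * em ^ (-r))) := by ring
            _ = kr * (A m ^ p * em ^ (-p)) := by rw [hDr]
      _ = ENNReal.ofReal kr * ∑' m : ℕ, ENNReal.ofReal ((A m / ((m:ℝ)+1)) ^ p) :=
          ENNReal.tsum_mul_left
      _ ≤ ENNReal.ofReal kr * ENNReal.ofReal (q ^ p * T₁) := by
          refine mul_le_mul_right ?_ _
          have h := hardy_ineq p q hp hpq a ha ha_sum
          simp only [← hA] at h
          exact h
  -- step 4: bound on the Y-sum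
  set Dn : ℝ := (1-s)*(q-1) + (s - 1/p - 1)*q with hDn
  have hYq : ∀ z : ℕ × ℕ, (ENNReal.ofReal (Y z)) ^ q
      = ENNReal.ofReal (k ((z.1:ℝ)+1) ((z.2:ℝ)+1) * ((z.1:ℝ)+1) ^ (r-1))
        * ENNReal.ofReal (((z.2:ℝ)+1) ^ Dn * B z.2 ^ q) := by
    intro z
    set em : ℝ := (z.1:ℝ)+1
    set en : ℝ := (z.2:ℝ)+1
    have hem : (0:ℝ) < em := by positivity
    have hen : (0:ℝ) < en := by positivity
    have hK : 0 < k em en := hk_pos _ _ hem hen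
    have hW : (0:ℝ) < k em en * em ^ (r-1) * en ^ ((1-s)*(q-1)) := by positivity
    have hYzq : Y z ^ q = (k em en * em ^ (r-1)) * (en ^ Dn * B z.2 ^ q) := by
      rw [hY]
      simp only
      rw [Real.mul_rpow (Real.rpow_nonneg hW.le _)
        (mul_nonneg (Real.rpow_nonneg hen.le _) (hB0 z.2)),
        ← Real.rpow_mul hW.le, one_div_mul_cancel hq0.ne', Real.rpow_one,
        Real.mul_rpow (Real.rpow_nonneg hen.le _) (hB0 z.2),
        ← Real.rpow_mul hen.le]
      rw [hDn, Real.rpow_add hen]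
      ring
    rw [ENNReal.ofReal_rpow_of_nonneg (hY0 z) hq0.le, hYzq,
      ENNReal.ofReal_mul (by positivity)]
  have hQbound : ∑' z : ℕ × ℕ, (ENNReal.ofReal (Y z)) ^ q
      ≤ ENNReal.ofReal kr * ENNReal.ofReal (p ^ q * T₂) := by
    calc ∑' z : ℕ × ℕ, (ENNReal.ofReal (Y z)) ^ q
        = ∑' m : ℕ, ∑' n : ℕ, (ENNReal.ofReal (Y (m,n))) ^ q :=
          ENNReal.tsum_prod (f := fun m n => (ENNReal.ofReal (Y (m,n))) ^ q)
      _ = ∑' n : ℕ, ∑' m : ℕ, (ENNReal.ofReal (Y (m,n))) ^ q := ENNReal.tsum_comm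
      _ = ∑' n : ℕ, ENNReal.ofReal (((n:ℝ)+1) ^ Dn * B n ^ q)
            * ∑' m : ℕ, ENNReal.ofReal (k ((m:ℝ)+1) ((n:ℝ)+1) * ((m:ℝ)+1) ^ (r-1)) := by
          congr 1; funext n
          rw [← ENNReal.tsum_mul_left]
          congr 1; funext m
          rw [hYq (m,n)]
          ring
      _ ≤ ∑' n : ℕ, ENNReal.ofReal (((n:ℝ)+1) ^ Dn * B n ^ q)
            * ENNReal.ofReal (kr * ((n:ℝ)+1) ^ (-s)) := by
          refine ENNReal.tsum_le_tsum fun n => ?_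
          exact mul_le_mul_right
            (kernel_sum₁ hr hs hrs hk_pos hk_hom hkr_int hkr hk_dec₁
              (by positivity : (0:ℝ) < (n:ℝ)+1)) _
      _ = ∑' n : ℕ, ENNReal.ofReal kr * ENNReal.ofReal ((B n / ((n:ℝ)+1)) ^ q) := by
          congr 1; funext n
          set en : ℝ := (n:ℝ)+1
          have hen : (0:ℝ) < en := by positivity
          rw [← ENNReal.ofReal_mul
            (mul_nonneg (Real.rpow_nonneg hen.le _) (Real.rpow_nonneg (hB0 n) _)),
            ← ENNReal.ofReal_mul hkr_pos.le]
          congr 1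
          have hDr : en ^ Dn * en ^ (-s) = en ^ (-q) := by
            rw [← Real.rpow_add hen]
            congr 1
            rw [hDn]
            field_simp
            nlinarith [hmul]
          have hdiv : (B n / en) ^ q = B n ^ q * en ^ (-q) := by
            rw [Real.div_rpow (hB0 n) hen.le, Real.rpow_neg hen.le, div_eq_mul_inv]
          rw [hdiv]
          calc en ^ Dn * B n ^ q * (kr * en ^ (-s))
              = kr * (B n ^ q * (en ^ Dn * en ^ (-s))) := by ring
            _ = kr * (B n ^ q * en ^ (-q)) := by rw [hDr]
      _ = ENNReal.ofReal kr * ∑' n : ℕ, ENNReal.ofReal ((B n / ((n:ℝ)+1)) ^ q) :=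
          ENNReal.tsum_mul_left
      _ ≤ ENNReal.ofReal kr * ENNReal.ofReal (p ^ q * T₂) := by
          refine mul_le_mul_right ?_ _
          have h := hardy_ineq q p hq1 (by linarith) b hb hb_sum
          simp only [← hB] at h
          exact h
  -- step 5: combine
  have hkr_ne : ENNReal.ofReal kr ≠ 0 := by
    simp [ENNReal.ofReal_eq_zero, not_le, hkr_pos]
  have hkr_netop : ENNReal.ofReal kr ≠ ⊤ := ENNReal.ofReal_ne_top
  calc ∑' z : ℕ × ℕ, ENNReal.ofReal (X z) * ENNReal.ofReal (Y z)
      ≤ (∑' z : ℕ × ℕ, (ENNReal.ofReal (X z)) ^ p) ^ (1/p)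
        * (∑' z : ℕ × ℕ, (ENNReal.ofReal (Y z)) ^ q) ^ (1/q) := hHolder
    _ ≤ (ENNReal.ofReal kr * ENNReal.ofReal (q ^ p * T₁)) ^ (1/p)
        * (ENNReal.ofReal kr * ENNReal.ofReal (p ^ q * T₂)) ^ (1/q) :=
        mul_le_mul' (ENNReal.rpow_le_rpow hPbound (by positivity))
          (ENNReal.rpow_le_rpow hQbound (by positivity))
    _ = ENNReal.ofReal kr ^ (1/p) * ENNReal.ofReal kr ^ (1/q)
        * (ENNReal.ofReal (q ^ p * T₁) ^ (1/p) * ENNReal.ofReal (p ^ q * T₂) ^ (1/q)) := by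
        rw [ENNReal.mul_rpow_of_nonneg _ _ (by positivity : (0:ℝ) ≤ 1/p),
          ENNReal.mul_rpow_of_nonneg _ _ (by positivity : (0:ℝ) ≤ 1/q)]
        ring
    _ = ENNReal.ofReal kr
        * (ENNReal.ofReal ((q ^ p * T₁) ^ (1/p)) * ENNReal.ofReal ((p ^ q * T₂) ^ (1/q))) := by
        rw [← ENNReal.rpow_add _ _ hkr_ne hkr_netop, hpq, ENNReal.rpow_one,
          ENNReal.ofReal_rpow_of_nonneg (by positivity) (by positivity : (0:ℝ) ≤ 1/p),
          ENNReal.ofReal_rpow_of_nonneg (by positivity) (by positivity : (0:ℝ) ≤ 1/q)]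
    _ = ENNReal.ofReal (p * q * kr * T₁ ^ (1 / p) * T₂ ^ (1 / q)) := by
        have h1 : (q ^ p * T₁) ^ (1/p) = q * T₁ ^ (1/p) := by
          rw [Real.mul_rpow (Real.rpow_nonneg hq0.le p) hT₁0, ← Real.rpow_mul hq0.le,
            mul_one_div_cancel hp0.ne', Real.rpow_one]
        have h2 : (p ^ q * T₂) ^ (1/q) = p * T₂ ^ (1/q) := by
          rw [Real.mul_rpow (Real.rpow_nonneg hp0.le q) hT₂0, ← Real.rpow_mul hp0.le,
            mul_one_div_cancel hq0.ne', Real.rpow_one]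
        rw [h1, h2, ← ENNReal.ofReal_mul (by positivity : (0:ℝ) ≤ q * T₁ ^ (1/p)),
          ← ENNReal.ofReal_mul hkr_pos.le]
        congr 1
        ring
end

section
/- Let p > 1, 1/p + 1/q = 1, λ > 0, r, s > 0 with r + s = λ. Let k : (0,∞)² → (0,∞) be measurable and homogeneous of degree -λ with k_λ(r) = ∫₀^∞ k(u,1) u^{r-1} du finite and positive, u ↦ k(u,1) u^{r-1} and u ↦ k(1,u) u^{s-1} decreasing on (0,∞). Let (aₙ) be a nonnegative sequence with 0 < ∑ aₙ^p < ∞ and Aₙ = a₁+⋯+aₙ. Then ∑ₙ (∑ₘ m^{r - 1/q - 1} n^{s - 1/p} k(m,n) Aₘ)^p ≤ (q k_λ(r))^p ∑ aₙ^p. -/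
open MeasureTheory Set Real Filter
open scoped ENNReal NNReal


lemma aux_tsum_ofReal_le_of_sum_le {f : ℕ → ℝ} (hf : ∀ n, 0 ≤ f n) {c : ℝ}
    (h : ∀ M, ∑ m ∈ Finset.range M, f m ≤ c) :
    ∑' m, ENNReal.ofReal (f m) ≤ ENNReal.ofReal c := by
  rw [ENNReal.tsum_eq_iSup_nat]
  refine iSup_le fun M => ?_
  rw [← ENNReal.ofReal_sum_of_nonneg (fun i _ => hf i)]
  exact ENNReal.ofReal_le_ofReal (h M)

lemma aux_sum_le_integral (f : ℝ → ℝ) (hanti : AntitoneOn f (Ioi 0))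
    (hnn : ∀ x ∈ Ioi (0:ℝ), 0 ≤ f x)
    (hint : IntegrableOn f (Ioi 0)) {ν : ℝ} (hν : 0 < ν) (M : ℕ) :
    ∑ m ∈ Finset.range M, f (((m:ℝ)+1)/ν) ≤ ν * ∫ x in Ioi (0:ℝ), f x := by
  have key : ∀ m : ℕ, f (((m:ℝ)+1)/ν) ≤ ν * ∫ x in (m:ℝ)/ν..((m:ℝ)+1)/ν, f x := by
    intro m
    have hle : (m:ℝ)/ν ≤ ((m:ℝ)+1)/ν := by
      gcongr <;> linarith
    have hsub : Ioc ((m:ℝ)/ν) (((m:ℝ)+1)/ν) ⊆ Ioi (0:ℝ) := by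
      intro x hx
      have : (0:ℝ) ≤ (m:ℝ)/ν := div_nonneg (by positivity) hν.le
      exact lt_of_le_of_lt this hx.1
    have hmem : ((m:ℝ)+1)/ν ∈ Ioi (0:ℝ) := by
      have : (0:ℝ) < ((m:ℝ)+1)/ν := by positivity
      exact this
    have hintIoc : IntegrableOn f (Ioc ((m:ℝ)/ν) (((m:ℝ)+1)/ν)) := hint.mono_set hsub
    have h1 : ∫ x in Ioc ((m:ℝ)/ν) (((m:ℝ)+1)/ν), (fun _ => f (((m:ℝ)+1)/ν)) x
        ≤ ∫ x in Ioc ((m:ℝ)/ν) (((m:ℝ)+1)/ν), f x := by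
      apply setIntegral_mono_on (integrableOn_const measure_Ioc_lt_top.ne) hintIoc
        measurableSet_Ioc
      intro x hx
      exact hanti (hsub hx) hmem hx.2
    rw [setIntegral_const] at h1
    rw [intervalIntegral.integral_of_le hle]
    have hvol : volume.real (Ioc ((m:ℝ)/ν) (((m:ℝ)+1)/ν)) = 1/ν := by
      unfold Measure.real
      rw [Real.volume_Ioc, ENNReal.toReal_ofReal (by linarith)]
      field_simp
      ring
    rw [hvol] at h1
    have := mul_le_mul_of_nonneg_left h1 hν.le
    calc f (((m:ℝ)+1)/ν) = ν * (1/ν * f (((m:ℝ)+1)/ν)) := by field_simp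
    _ ≤ ν * ∫ x in Ioc ((m:ℝ)/ν) (((m:ℝ)+1)/ν), f x := this
  calc ∑ m ∈ Finset.range M, f (((m:ℝ)+1)/ν)
      ≤ ∑ m ∈ Finset.range M, ν * ∫ x in (m:ℝ)/ν..((m:ℝ)+1)/ν, f x :=
        Finset.sum_le_sum fun m _ => key m
    _ = ν * ∑ m ∈ Finset.range M, ∫ x in ((m:ℝ)/ν)..(((m:ℝ)+1)/ν), f x := by
        rw [Finset.mul_sum]
    _ = ν * ∫ x in ((0:ℕ):ℝ)/ν..((M:ℕ):ℝ)/ν, f x := by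
        congr 1
        have := intervalIntegral.sum_integral_adjacent_intervals
          (f := f) (μ := volume) (a := fun i : ℕ => (i:ℝ)/ν) (n := M) ?_
        · rw [← this]
          apply Finset.sum_congr rfl
          intro i _
          norm_num
        · intro k hk
          have hle : (k:ℝ)/ν ≤ ((k:ℝ)+1)/ν := by
            gcongr <;> linarith
          have hsub : Ioc ((k:ℝ)/ν) (((k:ℝ)+1)/ν) ⊆ Ioi (0:ℝ) := by
            intro x hx
            have : (0:ℝ) ≤ (k:ℝ)/ν := div_nonneg (by positivity) hν.le
            exact lt_of_le_of_lt this hx.1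
          rw [intervalIntegrable_iff_integrableOn_Ioc_of_le (by push_cast; exact hle)]
          exact hint.mono_set (by push_cast; exact hsub)
    _ ≤ ν * ∫ x in Ioi (0:ℝ), f x := by
        apply mul_le_mul_of_nonneg_left ?_ hν.le
        have h00 : ((0:ℕ):ℝ)/ν ≤ ((M:ℕ):ℝ)/ν := by gcongr <;> positivity
        rw [intervalIntegral.integral_of_le h00]
        apply setIntegral_mono_set hint
        · filter_upwards [self_mem_ae_restrict measurableSet_Ioi] with x hx using hnn x hx
        · apply HasSubset.Subset.eventuallyLE
          intro x hx
          have : (0:ℝ) ≤ ((0:ℕ):ℝ)/ν := by norm_num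
          exact lt_of_le_of_lt this hx.1

lemma aux_W_bound (f : ℝ → ℝ) (hanti : AntitoneOn f (Ioi 0))
    (hnn : ∀ x ∈ Ioi (0:ℝ), 0 ≤ f x)
    (hint : IntegrableOn f (Ioi 0)) {ν : ℝ} (hν : 0 < ν) :
    ∑' m : ℕ, ENNReal.ofReal (f (((m:ℝ)+1)/ν)) ≤ ENNReal.ofReal (ν * ∫ x in Ioi (0:ℝ), f x) :=
  aux_tsum_ofReal_le_of_sum_le
    (fun m => hnn _ (by positivity : (0:ℝ) < ((m:ℝ)+1)/ν))
    (aux_sum_le_integral f hanti hnn hint hν)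

lemma aux_tsum_holder {p q : ℝ} (hpq : p.HolderConjugate q) (f g : ℕ → ℝ≥0∞) :
    ∑' m, f m * g m ≤ (∑' m, f m ^ p) ^ (1/p) * (∑' m, g m ^ q) ^ (1/q) := by
  simp_rw [← MeasureTheory.lintegral_count]
  exact ENNReal.lintegral_mul_le_Lp_mul_Lq _ hpq
    (measurable_from_nat.aemeasurable) (measurable_from_nat.aemeasurable)


lemma aux_hardy_key {p q : ℝ} (hp : 1 < p) (hq1 : 1 < q) (hqp : q * (p - 1) = p)
    (hconj : p.HolderConjugate q)
    {x y c aa : ℝ} (hx : 0 ≤ x) (hy : 0 ≤ y) (hc : 0 ≤ c)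
    (haa : aa = (c+2)*x - (c+1)*y) :
    x ^ p - q * (x ^ (p-1) * aa) ≤ (q-1) * ((c+1) * y ^ p - (c+2) * x ^ p) := by
  have hp0 : (0:ℝ) < p := by linarith
  have hq0 : (0:ℝ) < q := by linarith
  have hpow : x ^ (p-1) * x = x ^ p := by
    have h := Real.rpow_add' hx (show (p-1) + 1 ≠ 0 by linarith)
    rw [show (p-1) + 1 = p by ring] at h
    rw [h, Real.rpow_one]
  have young : x ^ (p-1) * y ≤ x ^ p / q + y ^ p / p := by
    have h := Real.young_inequality_of_nonneg (Real.rpow_nonneg hx (p-1)) hy hconj.symm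
    have e1 : (x ^ (p-1)) ^ q = x ^ p := by
      rw [← Real.rpow_mul hx]
      congr 1
      linarith [hqp]
    rw [e1] at h
    linarith [h]
  have young2 : q * (c+1) * (x ^ (p-1) * y) ≤ (c+1) * x ^ p + (q-1) * ((c+1) * y ^ p) := by
    have h := mul_le_mul_of_nonneg_left young (show (0:ℝ) ≤ q * (c+1) by positivity)
    calc q * (c+1) * (x ^ (p-1) * y) ≤ q * (c+1) * (x ^ p / q + y ^ p / p) := h
      _ = (c+1) * x ^ p + (q-1) * ((c+1) * y ^ p) := by
          have hq' : q ≠ 0 := hq0.ne'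
          have hp' : p ≠ 0 := hp0.ne'
          calc q * (c+1) * (x ^ p / q + y ^ p / p)
              = (c+1) * x ^ p * (q/q) + (c+1) * y ^ p * (q/p) := by ring
            _ = (c+1) * x ^ p + (q-1) * ((c+1) * y ^ p) := by
              rw [div_self hq', show q/p = q-1 by rw [div_eq_iff hp']; linear_combination -hqp]
              ring
  have expand : q * (x ^ (p-1) * aa) = q*(c+2)*x^p - q*(c+1)*(x^(p-1)*y) := by
    rw [haa, ← hpow]; ring
  have step : x ^ p - q * (x ^ (p-1) * aa)
      ≤ x^p - q*(c+2)*x^p + ((c+1)*x^p + (q-1)*((c+1)*y^p)) := by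
    rw [expand]; linarith [young2]
  calc x ^ p - q * (x ^ (p-1) * aa)
      ≤ x^p - q*(c+2)*x^p + ((c+1)*x^p + (q-1)*((c+1)*y^p)) := step
    _ = (q-1) * ((c+1) * y ^ p - (c+2) * x ^ p) := by ring


lemma aux_hardy_finite (p q : ℝ) (hp : 1 < p) (hpq : 1 / p + 1 / q = 1)
    (a : ℕ → ℝ) (ha : ∀ n, 0 ≤ a n)
    (A : ℕ → ℝ) (hA : ∀ n, A n = ∑ i ∈ Finset.range (n + 1), a i) (N : ℕ) :
    ∑ n ∈ Finset.range N, (A n / ((n:ℝ)+1)) ^ p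
      ≤ q ^ p * ∑ n ∈ Finset.range N, a n ^ p := by
  have hp0 : (0:ℝ) < p := by linarith
  have hp1 : (0:ℝ) < p - 1 := by linarith
  have hq0 : (0:ℝ) < q := by
    have h2 : 1/p < 1 := by rw [div_lt_one hp0]; exact hp
    have h3 : (0:ℝ) < 1/q := by linarith
    exact one_div_pos.mp h3
  have hqp : q * (p - 1) = p := by
    have h := hpq
    field_simp at h
    linear_combination -h
  have hq1 : 1 < q := by nlinarith
  have hconj : p.HolderConjugate q := Real.holderConjugate_iff.mpr ⟨hp, by rw [← one_div, ← one_div]; exact hpq⟩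
  set α : ℕ → ℝ := fun n => A n / ((n:ℝ)+1) with hα
  have hA_nonneg : ∀ n, 0 ≤ A n := fun n => by
    rw [hA n]; exact Finset.sum_nonneg fun i _ => ha i
  have hα_nonneg : ∀ n, 0 ≤ α n := fun n => div_nonneg (hA_nonneg n) (by positivity)
  set T : ℕ → ℝ := fun n => (n:ℝ) * α (n-1) ^ p with hT
  have key : ∀ n, α n ^ p - q * (α n ^ (p-1) * a n) ≤ (q-1) * (T n - T (n+1)) := by
    intro n
    have hTs : ∀ m : ℕ, T (m+1) = ((m:ℝ)+1) * α m ^ p := by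
      intro m; simp only [hT]; push_cast; simp
    cases n with
    | zero =>
      have hα0 : α 0 = a 0 := by simp [hα, hA 0]
      have hT0 : T 0 = 0 := by simp [hT]
      have hpow : a 0 ^ (p-1) * a 0 = a 0 ^ p := by
        have h := Real.rpow_add' (ha 0) (show (p-1) + 1 ≠ 0 by linarith)
        rw [show (p-1) + 1 = p by ring] at h
        rw [h, Real.rpow_one]
      rw [hT0, hTs 0, hα0, hpow]
      norm_num
      linarith [Real.rpow_nonneg (ha 0) p]
    | succ n =>
      rw [hTs (n+1), hTs n]
      have e1 : ((n:ℝ)+2) * α (n+1) = A (n+1) := by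
        simp only [hα]; push_cast; field_simp; ring
      have e2 : ((n:ℝ)+1) * α n = A n := by
        simp only [hα]; field_simp
      have e3 : A (n+1) = A n + a (n+1) := by
        rw [hA (n+1), hA n, Finset.sum_range_succ]
      have ha_eq : a (n+1) = ((n:ℝ)+2) * α (n+1) - ((n:ℝ)+1) * α n := by
        rw [e1, e2]; linarith
      have h := aux_hardy_key hp hq1 hqp hconj (hα_nonneg (n+1)) (hα_nonneg n)
        (Nat.cast_nonneg n : (0:ℝ) ≤ (n:ℝ)) ha_eq
      push_cast
      push_cast at h
      linarith [h]
  have sum_key : ∑ n ∈ Finset.range N, (α n ^ p - q * (α n ^ (p-1) * a n))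
      ≤ (q-1) * (T 0 - T N) := by
    calc ∑ n ∈ Finset.range N, (α n ^ p - q * (α n ^ (p-1) * a n))
        ≤ ∑ n ∈ Finset.range N, (q-1)*(T n - T (n+1)) :=
          Finset.sum_le_sum fun n _ => key n
      _ = (q-1) * ∑ n ∈ Finset.range N, (T n - T (n+1)) := by rw [Finset.mul_sum]
      _ = (q-1) * (T 0 - T N) := by rw [Finset.sum_range_sub' T]
  have hT0 : T 0 = 0 := by simp [hT]
  have hTN : 0 ≤ T N := by
    simp only [hT]
    exact mul_nonneg (Nat.cast_nonneg N) (Real.rpow_nonneg (hα_nonneg _) p)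
  have sum1 : ∑ n ∈ Finset.range N, α n ^ p
      ≤ q * ∑ n ∈ Finset.range N, (α n ^ (p-1) * a n) := by
    rw [Finset.sum_sub_distrib, ← Finset.mul_sum] at sum_key
    rw [hT0] at sum_key
    nlinarith [sum_key, hTN]
  have holder : ∑ n ∈ Finset.range N, (α n ^ (p-1) * a n)
      ≤ (∑ n ∈ Finset.range N, α n ^ p) ^ (1/q) * (∑ n ∈ Finset.range N, a n ^ p) ^ (1/p) := by
    have h := Real.inner_le_Lp_mul_Lq (Finset.range N) (fun n => α n ^ (p-1)) a hconj.symm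
    have e1 : ∑ n ∈ Finset.range N, |α n ^ (p-1)| ^ q = ∑ n ∈ Finset.range N, α n ^ p := by
      apply Finset.sum_congr rfl
      intro n _
      rw [abs_of_nonneg (Real.rpow_nonneg (hα_nonneg n) _), ← Real.rpow_mul (hα_nonneg n)]
      congr 1; linarith [hqp]
    have e2 : ∑ n ∈ Finset.range N, |a n| ^ p = ∑ n ∈ Finset.range N, a n ^ p := by
      apply Finset.sum_congr rfl
      intro n _
      rw [abs_of_nonneg (ha n)]
    rw [e1, e2] at h
    exact h
  set S := ∑ n ∈ Finset.range N, α n ^ p with hS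
  set W := ∑ n ∈ Finset.range N, a n ^ p with hW
  have hS0 : 0 ≤ S := Finset.sum_nonneg fun n _ => Real.rpow_nonneg (hα_nonneg n) p
  have hW0 : 0 ≤ W := Finset.sum_nonneg fun n _ => Real.rpow_nonneg (ha n) p
  rcases eq_or_lt_of_le hS0 with hSe | hSpos
  · rw [← hSe]; positivity
  · have hmain : S ≤ q * (S ^ (1/q) * W ^ (1/p)) := by
      calc S ≤ q * ∑ n ∈ Finset.range N, (α n ^ (p-1) * a n) := sum1
        _ ≤ q * (S ^ (1/q) * W ^ (1/p)) := by
            apply mul_le_mul_of_nonneg_left holder hq0.le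
    have hsplit : S = S ^ (1/p) * S ^ (1/q) := by
      rw [← Real.rpow_add hSpos, hpq, Real.rpow_one]
    have hcancel : S ^ (1/p) ≤ q * W ^ (1/p) := by
      have hq' : 0 < S ^ (1/q) := Real.rpow_pos_of_pos hSpos _
      apply le_of_mul_le_mul_right _ hq'
      calc S ^ (1/p) * S ^ (1/q) = S := hsplit.symm
        _ ≤ q * (S ^ (1/q) * W ^ (1/p)) := hmain
        _ = q * W ^ (1/p) * S ^ (1/q) := by ring
    have := Real.rpow_le_rpow (Real.rpow_nonneg hS0 _) hcancel hp0.le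
    rw [← Real.rpow_mul hS0, one_div, inv_mul_cancel₀ hp0.ne', Real.rpow_one] at this
    rw [Real.mul_rpow hq0.le (Real.rpow_nonneg hW0 _), ← Real.rpow_mul hW0] at this
    rw [show p⁻¹*p = (1:ℝ) by field_simp, Real.rpow_one] at this
    exact this


lemma aux_G (lam r s : ℝ) (hrs : r + s = lam) (k : ℝ → ℝ → ℝ)
    (hk_hom : ∀ u x y : ℝ, 0 < u → 0 < x → 0 < y →
      k (u * x) (u * y) = u ^ (-lam) * k x y)
    (kr : ℝ)
    (hkr_int : IntegrableOn (fun u => k u 1 * u ^ (r - 1)) (Ioi (0:ℝ)))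
    (hkr : kr = ∫ u in Ioi (0:ℝ), k u 1 * u ^ (r - 1)) :
    IntegrableOn (fun u => k 1 u * u ^ (s - 1)) (Ioi (0:ℝ)) ∧
    (∫ u in Ioi (0:ℝ), k 1 u * u ^ (s - 1)) = kr := by
  set G : ℝ → ℝ := fun u => k 1 u * u ^ (s - 1) with hG
  have claim : ∀ x ∈ Ioi (0:ℝ),
      (|(-1:ℝ)| * x ^ ((-1:ℝ) - 1)) • G (x ^ (-1:ℝ)) = k x 1 * x ^ (r - 1) := by
    intro x hx
    have hx0 : (0:ℝ) < x := hx
    have h1 : k 1 x⁻¹ = x ^ lam * k x 1 := by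
      have h := hk_hom x⁻¹ x 1 (by positivity) hx0 one_pos
      rw [inv_mul_cancel₀ hx0.ne', mul_one] at h
      rw [h, Real.inv_rpow hx0.le, Real.rpow_neg hx0.le, inv_inv]
    have h2 : (x⁻¹) ^ (s-1) = x ^ (1-s) := by
      rw [Real.inv_rpow hx0.le, ← Real.rpow_neg hx0.le]
      norm_num
    rw [Real.rpow_neg_one x]
    simp only [hG, smul_eq_mul, abs_neg, abs_one]
    rw [h1, h2]
    rw [show ((-1:ℝ) - 1) = -2 by norm_num]
    have comb : x ^ (-2:ℝ) * x ^ lam * x ^ (1-s) = x ^ (r-1) := by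
      rw [← Real.rpow_add hx0, ← Real.rpow_add hx0]
      congr 1
      linarith
    calc 1 * x ^ (-2:ℝ) * (x ^ lam * k x 1 * x ^ (1-s))
        = k x 1 * (x ^ (-2:ℝ) * x ^ lam * x ^ (1-s)) := by ring
      _ = k x 1 * x ^ (r-1) := by rw [comb]
  constructor
  · rw [← integrableOn_Ioi_comp_rpow_iff G (show (-1:ℝ) ≠ 0 by norm_num)]
    exact (integrableOn_congr_fun claim measurableSet_Ioi).mpr hkr_int
  · rw [← integral_comp_rpow_Ioi G (show (-1:ℝ) ≠ 0 by norm_num), hkr]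
    exact setIntegral_congr_fun measurableSet_Ioi claim


lemma aux_W1 (lam r s : ℝ) (hrs : r + s = lam) (k : ℝ → ℝ → ℝ)
    (hk_pos : ∀ x y : ℝ, 0 < x → 0 < y → 0 < k x y)
    (hk_hom : ∀ u x y : ℝ, 0 < u → 0 < x → 0 < y →
      k (u * x) (u * y) = u ^ (-lam) * k x y)
    (kr : ℝ)
    (hkr_int : IntegrableOn (fun u => k u 1 * u ^ (r - 1)) (Ioi (0:ℝ)))
    (hkr : kr = ∫ u in Ioi (0:ℝ), k u 1 * u ^ (r - 1))
    (hk_dec₁ : AntitoneOn (fun u => k u 1 * u ^ (r - 1)) (Ioi (0:ℝ)))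
    {ν : ℝ} (hν : 0 < ν) :
    ∑' m : ℕ, ENNReal.ofReal (k ((m:ℝ)+1) ν * ((m:ℝ)+1) ^ (r-1))
      ≤ ENNReal.ofReal (kr * ν ^ (-s)) := by
  set F : ℝ → ℝ := fun u => k u 1 * u ^ (r-1) with hF
  have hF_nonneg : ∀ x ∈ Ioi (0:ℝ), 0 ≤ F x := fun x hx =>
    mul_nonneg (hk_pos x 1 hx one_pos).le (Real.rpow_nonneg (le_of_lt hx) _)
  have hterm : ∀ m : ℕ, k ((m:ℝ)+1) ν * ((m:ℝ)+1) ^ (r-1)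
      = ν ^ (r-1-lam) * F (((m:ℝ)+1)/ν) := by
    intro m
    set μ : ℝ := (m:ℝ)+1 with hμ
    have hμ0 : (0:ℝ) < μ := by positivity
    have h1 : k μ ν = ν ^ (-lam) * k (μ/ν) 1 := by
      have h := hk_hom ν (μ/ν) 1 hν (by positivity) one_pos
      rw [mul_div_cancel₀ _ hν.ne', mul_one] at h
      exact h
    have h2 : μ ^ (r-1) = ν ^ (r-1) * (μ/ν) ^ (r-1) := by
      rw [Real.div_rpow hμ0.le hν.le]
      field_simp
    rw [h1, h2]
    simp only [hF]
    rw [show r - 1 - lam = -lam + (r-1) by ring, Real.rpow_add hν]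
    ring
  calc ∑' m : ℕ, ENNReal.ofReal (k ((m:ℝ)+1) ν * ((m:ℝ)+1) ^ (r-1))
      = ∑' m : ℕ, ENNReal.ofReal (ν ^ (r-1-lam)) * ENNReal.ofReal (F (((m:ℝ)+1)/ν)) := by
        apply tsum_congr
        intro m
        rw [hterm m, ENNReal.ofReal_mul (Real.rpow_nonneg hν.le _)]
    _ = ENNReal.ofReal (ν ^ (r-1-lam)) * ∑' m : ℕ, ENNReal.ofReal (F (((m:ℝ)+1)/ν)) :=
        ENNReal.tsum_mul_left
    _ ≤ ENNReal.ofReal (ν ^ (r-1-lam)) * ENNReal.ofReal (ν * ∫ x in Ioi (0:ℝ), F x) := by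
        gcongr
        exact aux_W_bound F hk_dec₁ hF_nonneg hkr_int hν
    _ = ENNReal.ofReal (kr * ν ^ (-s)) := by
        rw [← ENNReal.ofReal_mul (Real.rpow_nonneg hν.le _), ← hkr]
        congr 1
        rw [show ν ^ (r-1-lam) * (ν * kr) = kr * (ν ^ (r-1-lam) * ν) by ring]
        congr 1
        rw [show ν ^ (r-1-lam) * ν = ν ^ (r-1-lam) * ν ^ (1:ℝ) by rw [Real.rpow_one],
          ← Real.rpow_add hν]
        congr 1
        linarith

lemma aux_W2 (lam r s : ℝ) (hrs : r + s = lam) (k : ℝ → ℝ → ℝ)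
    (hk_pos : ∀ x y : ℝ, 0 < x → 0 < y → 0 < k x y)
    (hk_hom : ∀ u x y : ℝ, 0 < u → 0 < x → 0 < y →
      k (u * x) (u * y) = u ^ (-lam) * k x y)
    (kr : ℝ)
    (hG_int : IntegrableOn (fun u => k 1 u * u ^ (s - 1)) (Ioi (0:ℝ)))
    (hG_val : (∫ u in Ioi (0:ℝ), k 1 u * u ^ (s - 1)) = kr)
    (hk_dec₂ : AntitoneOn (fun u => k 1 u * u ^ (s - 1)) (Ioi (0:ℝ)))
    {μ : ℝ} (hμ : 0 < μ) :
    ∑' n : ℕ, ENNReal.ofReal (k μ ((n:ℝ)+1) * ((n:ℝ)+1) ^ (s-1))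
      ≤ ENNReal.ofReal (kr * μ ^ (-r)) := by
  set G : ℝ → ℝ := fun u => k 1 u * u ^ (s-1) with hG
  have hG_nonneg : ∀ x ∈ Ioi (0:ℝ), 0 ≤ G x := fun x hx =>
    mul_nonneg (hk_pos 1 x one_pos hx).le (Real.rpow_nonneg (le_of_lt hx) _)
  have hterm : ∀ n : ℕ, k μ ((n:ℝ)+1) * ((n:ℝ)+1) ^ (s-1)
      = μ ^ (s-1-lam) * G (((n:ℝ)+1)/μ) := by
    intro n
    set ν : ℝ := (n:ℝ)+1 with hν
    have hν0 : (0:ℝ) < ν := by positivity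
    have h1 : k μ ν = μ ^ (-lam) * k 1 (ν/μ) := by
      have h := hk_hom μ 1 (ν/μ) hμ one_pos (by positivity)
      rw [mul_div_cancel₀ _ hμ.ne', mul_one] at h
      exact h
    have h2 : ν ^ (s-1) = μ ^ (s-1) * (ν/μ) ^ (s-1) := by
      rw [Real.div_rpow hν0.le hμ.le]
      field_simp
    rw [h1, h2]
    simp only [hG]
    rw [show s - 1 - lam = -lam + (s-1) by ring, Real.rpow_add hμ]
    ring
  calc ∑' n : ℕ, ENNReal.ofReal (k μ ((n:ℝ)+1) * ((n:ℝ)+1) ^ (s-1))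
      = ∑' n : ℕ, ENNReal.ofReal (μ ^ (s-1-lam)) * ENNReal.ofReal (G (((n:ℝ)+1)/μ)) := by
        apply tsum_congr
        intro n
        rw [hterm n, ENNReal.ofReal_mul (Real.rpow_nonneg hμ.le _)]
    _ = ENNReal.ofReal (μ ^ (s-1-lam)) * ∑' n : ℕ, ENNReal.ofReal (G (((n:ℝ)+1)/μ)) :=
        ENNReal.tsum_mul_left
    _ ≤ ENNReal.ofReal (μ ^ (s-1-lam)) * ENNReal.ofReal (μ * ∫ x in Ioi (0:ℝ), G x) := by
        gcongr
        exact aux_W_bound G hk_dec₂ hG_nonneg hG_int hμ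
    _ = ENNReal.ofReal (kr * μ ^ (-r)) := by
        rw [← ENNReal.ofReal_mul (Real.rpow_nonneg hμ.le _), hG_val]
        congr 1
        rw [show μ ^ (s-1-lam) * (μ * kr) = kr * (μ ^ (s-1-lam) * μ) by ring]
        congr 1
        rw [show μ ^ (s-1-lam) * μ = μ ^ (s-1-lam) * μ ^ (1:ℝ) by rw [Real.rpow_one],
          ← Real.rpow_add hμ]
        congr 1
        linarith


lemma aux_perN (p q lam r s : ℝ) (hp : 1 < p) (hq1 : 1 < q) (hpq : 1 / p + 1 / q = 1)
    (hrs : r + s = lam) (hconj : p.HolderConjugate q)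
    (k : ℝ → ℝ → ℝ) (hk_pos : ∀ x y : ℝ, 0 < x → 0 < y → 0 < k x y)
    (kr : ℝ) (hkr_pos : 0 < kr)
    (A : ℕ → ℝ) (hA_nonneg : ∀ m, 0 ≤ A m) (n : ℕ)
    (W1 : ∑' m : ℕ, ENNReal.ofReal (k ((m:ℝ)+1) ((n:ℝ)+1) * ((m:ℝ)+1) ^ (r-1))
      ≤ ENNReal.ofReal (kr * ((n:ℝ)+1) ^ (-s))) :
    (∑' m : ℕ, ENNReal.ofReal (((m:ℝ)+1) ^ (r - 1/q - 1) *
        ((n:ℝ)+1) ^ (s - 1/p) * k ((m:ℝ)+1) ((n:ℝ)+1) * A m)) ^ p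
    ≤ ENNReal.ofReal ((kr * ((n:ℝ)+1) ^ (1-lam)) ^ (p/q) * ((n:ℝ)+1) ^ (p*s-1)) *
      ∑' m : ℕ, (ENNReal.ofReal (k ((m:ℝ)+1) ((n:ℝ)+1)) *
        ENNReal.ofReal ((((n:ℝ)+1)/((m:ℝ)+1)) ^ ((r-1)*p/q)) *
        ENNReal.ofReal ((((m:ℝ)+1) ^ (r - 1/q) * (A m / ((m:ℝ)+1))) ^ p)) := by
  have hp0 : (0:ℝ) < p := by linarith
  have hq0 : (0:ℝ) < q := by linarith
  set ν : ℝ := (n:ℝ)+1 with hνdef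
  have hν : (0:ℝ) < ν := by positivity
  have hμ : ∀ m : ℕ, (0:ℝ) < (m:ℝ)+1 := fun m => by positivity
  set K : ℕ → ℝ≥0∞ := fun m => ENNReal.ofReal (k ((m:ℝ)+1) ν) with hK
  set D : ℕ → ℝ≥0∞ :=
    fun m => ENNReal.ofReal (((m:ℝ)+1) ^ (r - 1/q) * (A m / ((m:ℝ)+1))) with hD
  have hK0 : ∀ m, K m ≠ 0 := fun m => by
    simp only [hK, ne_eq, ENNReal.ofReal_eq_zero, not_le]
    exact hk_pos _ _ (hμ m) hν
  have hKt : ∀ m, K m ≠ ⊤ := fun m => ENNReal.ofReal_ne_top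
  -- Step 1 : rewrite the inner term
  have step1 : ∑' m : ℕ, ENNReal.ofReal (((m:ℝ)+1) ^ (r - 1/q - 1) *
      ν ^ (s - 1/p) * k ((m:ℝ)+1) ν * A m)
      = ENNReal.ofReal (ν ^ (s - 1/p)) * ∑' m : ℕ, K m * D m := by
    rw [← ENNReal.tsum_mul_left]
    apply tsum_congr
    intro m
    have hreal : ((m:ℝ)+1) ^ (r - 1/q - 1) * ν ^ (s - 1/p) * k ((m:ℝ)+1) ν * A m
        = ν ^ (s - 1/p) * (k ((m:ℝ)+1) ν * (((m:ℝ)+1) ^ (r - 1/q) * (A m / ((m:ℝ)+1)))) := by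
      rw [show r - 1/q - 1 = (r - 1/q) + (-1) by ring, Real.rpow_add (hμ m),
        Real.rpow_neg_one]
      field_simp
    rw [hreal, ENNReal.ofReal_mul (Real.rpow_nonneg hν.le _),
      ENNReal.ofReal_mul (hk_pos _ _ (hμ m) hν).le]
  -- Hölder data
  set E : ℕ → ℝ≥0∞ := fun m => ENNReal.ofReal ((ν/((m:ℝ)+1)) ^ ((r-1)/q)) with hE
  set E' : ℕ → ℝ≥0∞ := fun m => ENNReal.ofReal ((((m:ℝ)+1)/ν) ^ ((r-1)/q)) with hE'
  set f : ℕ → ℝ≥0∞ := fun m => K m ^ (1/p) * E m * D m with hf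
  set g : ℕ → ℝ≥0∞ := fun m => K m ^ (1/q) * E' m with hg
  have step2 : ∀ m, K m * D m = f m * g m := by
    intro m
    have hEE : E m * E' m = 1 := by
      simp only [hE, hE']
      rw [← ENNReal.ofReal_mul (Real.rpow_nonneg (by positivity) _),
        ← Real.mul_rpow (by positivity) (by positivity),
        div_mul_div_comm, mul_comm ν (((m:ℝ)+1)), div_self (by positivity), Real.one_rpow]
      simp
    have hKK : K m ^ (1/p) * K m ^ (1/q) = K m := by
      rw [← ENNReal.rpow_add _ _ (hK0 m) (hKt m), hpq, ENNReal.rpow_one]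
    calc K m * D m = (K m ^ (1/p) * K m ^ (1/q)) * ((E m * E' m) * D m) := by
          rw [hKK, hEE, one_mul]
      _ = f m * g m := by simp only [hf, hg]; ring
  have step3 := aux_tsum_holder hconj f g
  -- compute f^p
  have step4 : ∀ m, f m ^ p = K m * ENNReal.ofReal ((ν/((m:ℝ)+1)) ^ ((r-1)*p/q)) * D m ^ p := by
    intro m
    simp only [hf]
    rw [ENNReal.mul_rpow_of_nonneg _ _ hp0.le, ENNReal.mul_rpow_of_nonneg _ _ hp0.le]
    congr 1
    congr 1
    · rw [← ENNReal.rpow_mul, one_div, inv_mul_cancel₀ hp0.ne', ENNReal.rpow_one]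
    · simp only [hE]
      rw [ENNReal.ofReal_rpow_of_nonneg (Real.rpow_nonneg (by positivity) _) hp0.le,
        ← Real.rpow_mul (by positivity)]
      congr 2
      ring
  -- compute g^q and bound its sum
  have step5 : ∑' m, g m ^ q ≤ ENNReal.ofReal (kr * ν ^ (1-lam)) := by
    have hgq : ∀ m, g m ^ q = ENNReal.ofReal (ν ^ (1-r)) *
        ENNReal.ofReal (k ((m:ℝ)+1) ν * ((m:ℝ)+1) ^ (r-1)) := by
      intro m
      simp only [hg]
      rw [ENNReal.mul_rpow_of_nonneg _ _ hq0.le]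
      have h1 : (K m ^ (1/q)) ^ q = K m := by
        rw [← ENNReal.rpow_mul, one_div, inv_mul_cancel₀ hq0.ne', ENNReal.rpow_one]
      have h2 : E' m ^ q = ENNReal.ofReal (((m:ℝ)+1) ^ (r-1) * ν ^ (1-r)) := by
        simp only [hE']
        rw [ENNReal.ofReal_rpow_of_nonneg (Real.rpow_nonneg (by positivity) _) hq0.le,
          ← Real.rpow_mul (by positivity)]
        rw [show (r-1)/q*q = r-1 by field_simp]
        rw [Real.div_rpow (hμ m).le hν.le, div_eq_mul_inv, ← Real.rpow_neg hν.le]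
        congr 2
        ring
      rw [h1, h2, hK]
      rw [← ENNReal.ofReal_mul (hk_pos _ _ (hμ m) hν).le,
        ← ENNReal.ofReal_mul (Real.rpow_nonneg hν.le _)]
      congr 1
      ring
    calc ∑' m : ℕ, g m ^ q
        = ENNReal.ofReal (ν ^ (1-r)) *
            ∑' m : ℕ, ENNReal.ofReal (k ((m:ℝ)+1) ν * ((m:ℝ)+1) ^ (r-1)) := by
          rw [← ENNReal.tsum_mul_left]
          exact tsum_congr hgq
      _ ≤ ENNReal.ofReal (ν ^ (1-r)) * ENNReal.ofReal (kr * ν ^ (-s)) := by gcongr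
      _ = ENNReal.ofReal (kr * ν ^ (1-lam)) := by
          rw [← ENNReal.ofReal_mul (Real.rpow_nonneg hν.le _)]
          congr 1
          rw [show ν ^ (1-r) * (kr * ν ^ (-s)) = kr * (ν ^ (1-r) * ν ^ (-s)) by ring,
            ← Real.rpow_add hν, show (1:ℝ)-r + -s = 1-lam by linarith]
  -- assemble
  rw [step1]
  have e0 : ENNReal.ofReal (ν ^ (s - 1/p)) ^ p = ENNReal.ofReal (ν ^ (p*s-1)) := by
    have eexp : (s - 1/p) * p = p*s - 1 := by field_simp <;> ring
    rw [ENNReal.ofReal_rpow_of_nonneg (Real.rpow_nonneg hν.le _) hp0.le,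
      ← Real.rpow_mul hν.le, eexp]
  calc (ENNReal.ofReal (ν ^ (s - 1/p)) * ∑' m : ℕ, K m * D m) ^ p
      = ENNReal.ofReal (ν ^ (s - 1/p)) ^ p * (∑' m : ℕ, K m * D m) ^ p := by
        rw [ENNReal.mul_rpow_of_nonneg _ _ hp0.le]
    _ = ENNReal.ofReal (ν ^ (p*s-1)) * (∑' m : ℕ, f m * g m) ^ p := by
        rw [e0, tsum_congr step2]
    _ ≤ ENNReal.ofReal (ν ^ (p*s-1)) *
        ((∑' m : ℕ, f m ^ p) ^ (1/p) * (∑' m : ℕ, g m ^ q) ^ (1/q)) ^ p := by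
        gcongr
        all_goals try exact ENNReal.rpow_le_rpow step3 hp0.le
    _ = ENNReal.ofReal (ν ^ (p*s-1)) *
        ((∑' m : ℕ, f m ^ p) * ((∑' m : ℕ, g m ^ q) ^ (p/q))) := by
        congr 1
        rw [ENNReal.mul_rpow_of_nonneg _ _ hp0.le, ← ENNReal.rpow_mul, ← ENNReal.rpow_mul,
          one_div, inv_mul_cancel₀ hp0.ne', ENNReal.rpow_one,
          show (1/q)*p = p/q by ring]
    _ ≤ ENNReal.ofReal (ν ^ (p*s-1)) *
        ((∑' m : ℕ, f m ^ p) * (ENNReal.ofReal (kr * ν ^ (1-lam)) ^ (p/q))) := by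
        gcongr
        all_goals try exact ENNReal.rpow_le_rpow step5 (by positivity)
    _ = ENNReal.ofReal ((kr * ν ^ (1-lam)) ^ (p/q) * ν ^ (p*s-1)) *
        ∑' m : ℕ, f m ^ p := by
        have e1 : ENNReal.ofReal ((kr * ν ^ (1-lam)) ^ (p/q) * ν ^ (p*s-1))
            = ENNReal.ofReal (kr * ν ^ (1-lam)) ^ (p/q) * ENNReal.ofReal (ν ^ (p*s-1)) := by
          rw [ENNReal.ofReal_mul (by positivity),
            ← ENNReal.ofReal_rpow_of_nonneg (by positivity) (by positivity)]
        rw [e1]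
        try ring
    _ = ENNReal.ofReal ((kr * ν ^ (1-lam)) ^ (p/q) * ν ^ (p*s-1)) *
        ∑' m : ℕ, (ENNReal.ofReal (k ((m:ℝ)+1) ν) *
          ENNReal.ofReal ((ν/((m:ℝ)+1)) ^ ((r-1)*p/q)) *
          ENNReal.ofReal ((((m:ℝ)+1) ^ (r - 1/q) * (A m / ((m:ℝ)+1))) ^ p)) := by
        congr 1
        apply tsum_congr
        intro m
        rw [step4]
        simp only [hK, hD]
        rw [ENNReal.ofReal_rpow_of_nonneg
          (mul_nonneg (Real.rpow_nonneg (hμ m).le _) (div_nonneg (hA_nonneg m) (hμ m).le)) hp0.le]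


lemma aux_real1 (p q lam r s kr : ℝ) (hpq2 : p/q = p-1)
    (hrs : r + s = lam) (hkr : 0 ≤ kr) {μ ν : ℝ} (hμ : 0 < μ) (hν : 0 < ν)
    (kk cc : ℝ) :
    ((kr * ν^(1-lam)) ^ (p/q) * ν^(p*s-1)) * (kk * ((ν/μ)^((r-1)*p/q) * cc))
    = (kr^(p/q) * (μ^(-((r-1)*p/q)) * cc)) * (kk * ν^(s-1)) := by
  have h1 : (kr * ν^(1-lam))^(p/q) = kr^(p/q) * ν^((1-lam)*(p/q)) := by
    rw [Real.mul_rpow hkr (Real.rpow_nonneg hν.le _), ← Real.rpow_mul hν.le]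
  have h2 : (ν/μ)^((r-1)*p/q) = ν^((r-1)*p/q) * μ^(-((r-1)*p/q)) := by
    rw [Real.div_rpow hν.le hμ.le, div_eq_mul_inv, ← Real.rpow_neg hμ.le]
  have h3 : ν^((1-lam)*(p/q)) * ν^(p*s-1) * ν^((r-1)*p/q) = ν^(s-1) := by
    rw [← Real.rpow_add hν, ← Real.rpow_add hν]
    congr 1
    rw [show (r-1)*p/q = (r-1)*(p/q) by ring, hpq2]
    linear_combination (p-1) * hrs
  calc ((kr * ν^(1-lam)) ^ (p/q) * ν^(p*s-1)) * (kk * ((ν/μ)^((r-1)*p/q) * cc))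
      = (kr^(p/q) * (μ^(-((r-1)*p/q)) * cc)) * kk *
          (ν^((1-lam)*(p/q)) * ν^(p*s-1) * ν^((r-1)*p/q)) := by
        rw [h1, h2]; ring
    _ = (kr^(p/q) * (μ^(-((r-1)*p/q)) * cc)) * (kk * ν^(s-1)) := by rw [h3]; ring

lemma aux_real2 (p q r kr : ℝ) (hp0 : 0 < p) (hq0 : 0 < q) (hpq2 : p/q = p-1)
    (hqp : q*(p-1) = p) (hkr : 0 < kr) {μ : ℝ} (hμ : 0 < μ) {b : ℝ} (hb : 0 ≤ b) :
    kr^(p/q) * (μ^(-((r-1)*p/q)) * (μ^(r-1/q) * b)^p) * (kr * μ^(-r)) = kr^p * b^p := by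
  have h1 : (μ^(r-1/q) * b)^p = μ^((r-1/q)*p) * b^p := by
    rw [Real.mul_rpow (Real.rpow_nonneg hμ.le _) hb, ← Real.rpow_mul hμ.le]
  have h2 : μ^(-((r-1)*p/q)) * μ^((r-1/q)*p) * μ^(-r) = 1 := by
    rw [← Real.rpow_add hμ, ← Real.rpow_add hμ]
    rw [show -((r-1)*p/q) + (r-1/q)*p + -r = 0 by
      rw [show -((r-1)*p/q) + (r-1/q)*p + -r = r*(p - 1 - p/q) by ring, hpq2]; ring]
    exact Real.rpow_zero μ
  have h3 : kr^(p/q) * kr = kr^p := by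
    nth_rewrite 2 [show kr = kr^(1:ℝ) by rw [Real.rpow_one]]
    rw [← Real.rpow_add hkr]
    congr 1
    rw [hpq2]; ring
  calc kr^(p/q) * (μ^(-((r-1)*p/q)) * (μ^(r-1/q) * b)^p) * (kr * μ^(-r))
      = (kr^(p/q) * kr) * b^p * (μ^(-((r-1)*p/q)) * μ^((r-1/q)*p) * μ^(-r)) := by
        rw [h1]; ring
    _ = kr^p * b^p := by rw [h2, h3, mul_one]

theorem discrete_hardy_hilbert_general_kernel_equivalent_form
    (p q lam r s : ℝ) (hp : 1 < p) (hpq : 1 / p + 1 / q = 1)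
    (hlam : 0 < lam) (hr : 0 < r) (hs : 0 < s) (hrs : r + s = lam)
    (k : ℝ → ℝ → ℝ)
    (hk_meas : Measurable (Function.uncurry k))
    (hk_pos : ∀ x y : ℝ, 0 < x → 0 < y → 0 < k x y)
    (hk_hom : ∀ u x y : ℝ, 0 < u → 0 < x → 0 < y →
      k (u * x) (u * y) = u ^ (-lam) * k x y)
    (kr : ℝ) (hkr_pos : 0 < kr)
    (hkr_int : IntegrableOn (fun u => k u 1 * u ^ (r - 1)) (Ioi (0:ℝ)))
    (hkr : kr = ∫ u in Ioi (0:ℝ), k u 1 * u ^ (r - 1))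
    (hk_dec₁ : AntitoneOn (fun u => k u 1 * u ^ (r - 1)) (Ioi (0:ℝ)))
    (hk_dec₂ : AntitoneOn (fun u => k 1 u * u ^ (s - 1)) (Ioi (0:ℝ)))
    (a : ℕ → ℝ) (ha : ∀ n, 0 ≤ a n)
    (ha_sum : Summable (fun n => a n ^ p)) (ha_pos : 0 < ∑' n, a n ^ p)
    (A : ℕ → ℝ) (hA : ∀ n, A n = ∑ i ∈ Finset.range (n + 1), a i) :
    ∑' n : ℕ,
        (∑' m : ℕ, ENNReal.ofReal (((m : ℝ) + 1) ^ (r - 1 / q - 1) *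
          ((n : ℝ) + 1) ^ (s - 1 / p) * k ((m : ℝ) + 1) ((n : ℝ) + 1) * A m)) ^ p
      ≤ ENNReal.ofReal ((q * kr) ^ p * ∑' n, a n ^ p) := by
  have hp0 : (0:ℝ) < p := by linarith
  have hq0 : (0:ℝ) < q := by
    have h2 : 1/p < 1 := by rw [div_lt_one hp0]; exact hp
    have h3 : (0:ℝ) < 1/q := by linarith
    exact one_div_pos.mp h3
  have hqp : q * (p - 1) = p := by
    have h := hpq
    field_simp at h
    linear_combination -h
  have hq1 : 1 < q := by nlinarith
  have hpq2 : p/q = p - 1 := by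
    rw [div_eq_iff hq0.ne']
    linear_combination -hqp
  have hconj : p.HolderConjugate q := Real.holderConjugate_iff.mpr ⟨hp, by rw [← one_div, ← one_div]; exact hpq⟩
  have hA_nonneg : ∀ n, 0 ≤ A n := fun n => by
    rw [hA n]; exact Finset.sum_nonneg fun i _ => ha i
  obtain ⟨hG_int, hG_val⟩ := aux_G lam r s hrs k hk_hom kr hkr_int hkr
  have hμ : ∀ m : ℕ, (0:ℝ) < (m:ℝ)+1 := fun m => by positivity
  have W1 : ∀ n : ℕ, ∑' m : ℕ, ENNReal.ofReal (k ((m:ℝ)+1) ((n:ℝ)+1) * ((m:ℝ)+1) ^ (r-1))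
      ≤ ENNReal.ofReal (kr * ((n:ℝ)+1) ^ (-s)) := fun n =>
    aux_W1 lam r s hrs k hk_pos hk_hom kr hkr_int hkr hk_dec₁ (hμ n)
  have W2 : ∀ m : ℕ, ∑' n : ℕ, ENNReal.ofReal (k ((m:ℝ)+1) ((n:ℝ)+1) * ((n:ℝ)+1) ^ (s-1))
      ≤ ENNReal.ofReal (kr * ((m:ℝ)+1) ^ (-r)) := fun m =>
    aux_W2 lam r s hrs k hk_pos hk_hom kr hG_int hG_val hk_dec₂ (hμ m)
  have perN := fun n => aux_perN p q lam r s hp hq1 hpq hrs hconj k hk_pos kr hkr_pos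
    A hA_nonneg n (W1 n)
  have hHardy : ∑' m : ℕ, ENNReal.ofReal ((A m / ((m:ℝ)+1)) ^ p)
      ≤ ENNReal.ofReal (q ^ p * ∑' i, a i ^ p) := by
    apply aux_tsum_ofReal_le_of_sum_le
      (fun m => Real.rpow_nonneg (div_nonneg (hA_nonneg m) (hμ m).le) p)
    intro M
    refine (aux_hardy_finite p q hp hpq a ha A hA M).trans ?_
    apply mul_le_mul_of_nonneg_left _ (Real.rpow_nonneg hq0.le p)
    exact Summable.sum_le_tsum (Finset.range M) (fun i _ => Real.rpow_nonneg (ha i) p) ha_sum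
  calc ∑' n : ℕ,
        (∑' m : ℕ, ENNReal.ofReal (((m : ℝ) + 1) ^ (r - 1 / q - 1) *
          ((n : ℝ) + 1) ^ (s - 1 / p) * k ((m : ℝ) + 1) ((n : ℝ) + 1) * A m)) ^ p
      ≤ ∑' n : ℕ, (ENNReal.ofReal ((kr * ((n:ℝ)+1) ^ (1-lam)) ^ (p/q) * ((n:ℝ)+1) ^ (p*s-1)) *
          ∑' m : ℕ, (ENNReal.ofReal (k ((m:ℝ)+1) ((n:ℝ)+1)) *
            ENNReal.ofReal ((((n:ℝ)+1)/((m:ℝ)+1)) ^ ((r-1)*p/q)) *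
            ENNReal.ofReal ((((m:ℝ)+1) ^ (r - 1/q) * (A m / ((m:ℝ)+1))) ^ p))) :=
        ENNReal.tsum_le_tsum perN
    _ = ∑' n : ℕ, ∑' m : ℕ,
          ENNReal.ofReal ((kr * ((n:ℝ)+1) ^ (1-lam)) ^ (p/q) * ((n:ℝ)+1) ^ (p*s-1)) *
          (ENNReal.ofReal (k ((m:ℝ)+1) ((n:ℝ)+1)) *
            ENNReal.ofReal ((((n:ℝ)+1)/((m:ℝ)+1)) ^ ((r-1)*p/q)) *
            ENNReal.ofReal ((((m:ℝ)+1) ^ (r - 1/q) * (A m / ((m:ℝ)+1))) ^ p)) :=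
        tsum_congr fun n => ENNReal.tsum_mul_left.symm
    _ = ∑' m : ℕ, ∑' n : ℕ,
          ENNReal.ofReal ((kr * ((n:ℝ)+1) ^ (1-lam)) ^ (p/q) * ((n:ℝ)+1) ^ (p*s-1)) *
          (ENNReal.ofReal (k ((m:ℝ)+1) ((n:ℝ)+1)) *
            ENNReal.ofReal ((((n:ℝ)+1)/((m:ℝ)+1)) ^ ((r-1)*p/q)) *
            ENNReal.ofReal ((((m:ℝ)+1) ^ (r - 1/q) * (A m / ((m:ℝ)+1))) ^ p)) :=
        ENNReal.tsum_comm
    _ = ∑' m : ℕ, ∑' n : ℕ,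
          ENNReal.ofReal (kr ^ (p/q) * (((m:ℝ)+1) ^ (-((r-1)*p/q)) *
            (((m:ℝ)+1) ^ (r - 1/q) * (A m / ((m:ℝ)+1))) ^ p)) *
          ENNReal.ofReal (k ((m:ℝ)+1) ((n:ℝ)+1) * ((n:ℝ)+1) ^ (s-1)) := by
        apply tsum_congr; intro m; apply tsum_congr; intro n
        have hkk := (hk_pos _ _ (hμ m) (hμ n)).le
        have he2 : (0:ℝ) ≤ (((n:ℝ)+1)/((m:ℝ)+1)) ^ ((r-1)*p/q) :=
          Real.rpow_nonneg (by positivity) _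
        have hdp : (0:ℝ) ≤ (((m:ℝ)+1) ^ (r - 1/q) * (A m / ((m:ℝ)+1))) ^ p :=
          Real.rpow_nonneg (mul_nonneg (Real.rpow_nonneg (hμ m).le _)
            (div_nonneg (hA_nonneg m) (hμ m).le)) _
        have hCn : (0:ℝ) ≤ (kr * ((n:ℝ)+1) ^ (1-lam)) ^ (p/q) * ((n:ℝ)+1) ^ (p*s-1) :=
          mul_nonneg (Real.rpow_nonneg (mul_nonneg hkr_pos.le
            (Real.rpow_nonneg (hμ n).le _)) _) (Real.rpow_nonneg (hμ n).le _)
        have hc2 : (0:ℝ) ≤ kr ^ (p/q) * (((m:ℝ)+1) ^ (-((r-1)*p/q)) *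
            (((m:ℝ)+1) ^ (r - 1/q) * (A m / ((m:ℝ)+1))) ^ p) :=
          mul_nonneg (Real.rpow_nonneg hkr_pos.le _)
            (mul_nonneg (Real.rpow_nonneg (hμ m).le _) hdp)
        have h1 := aux_real1 p q lam r s kr hpq2 hrs hkr_pos.le (hμ m) (hμ n)
          (k ((m:ℝ)+1) ((n:ℝ)+1)) ((((m:ℝ)+1) ^ (r - 1/q) * (A m / ((m:ℝ)+1))) ^ p)
        rw [← ENNReal.ofReal_mul hkk,
          ← ENNReal.ofReal_mul (mul_nonneg hkk he2),
          ← ENNReal.ofReal_mul hCn,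
          ← ENNReal.ofReal_mul hc2]
        congr 1
        linear_combination h1
    _ = ∑' m : ℕ,
          ENNReal.ofReal (kr ^ (p/q) * (((m:ℝ)+1) ^ (-((r-1)*p/q)) *
            (((m:ℝ)+1) ^ (r - 1/q) * (A m / ((m:ℝ)+1))) ^ p)) *
          ∑' n : ℕ, ENNReal.ofReal (k ((m:ℝ)+1) ((n:ℝ)+1) * ((n:ℝ)+1) ^ (s-1)) :=
        tsum_congr fun m => ENNReal.tsum_mul_left
    _ ≤ ∑' m : ℕ,
          ENNReal.ofReal (kr ^ (p/q) * (((m:ℝ)+1) ^ (-((r-1)*p/q)) *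
            (((m:ℝ)+1) ^ (r - 1/q) * (A m / ((m:ℝ)+1))) ^ p)) *
          ENNReal.ofReal (kr * ((m:ℝ)+1) ^ (-r)) := by
        apply ENNReal.tsum_le_tsum
        intro m
        exact mul_le_mul_right (W2 m) _
    _ = ∑' m : ℕ, ENNReal.ofReal (kr ^ p) * ENNReal.ofReal ((A m / ((m:ℝ)+1)) ^ p) := by
        apply tsum_congr; intro m
        have hdp : (0:ℝ) ≤ (((m:ℝ)+1) ^ (r - 1/q) * (A m / ((m:ℝ)+1))) ^ p :=
          Real.rpow_nonneg (mul_nonneg (Real.rpow_nonneg (hμ m).le _)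
            (div_nonneg (hA_nonneg m) (hμ m).le)) _
        have hc2 : (0:ℝ) ≤ kr ^ (p/q) * (((m:ℝ)+1) ^ (-((r-1)*p/q)) *
            (((m:ℝ)+1) ^ (r - 1/q) * (A m / ((m:ℝ)+1))) ^ p) :=
          mul_nonneg (Real.rpow_nonneg hkr_pos.le _)
            (mul_nonneg (Real.rpow_nonneg (hμ m).le _) hdp)
        rw [← ENNReal.ofReal_mul hc2,
          ← ENNReal.ofReal_mul (Real.rpow_nonneg hkr_pos.le p)]
        congr 1
        exact aux_real2 p q r kr hp0 hq0 hpq2 hqp hkr_pos (hμ m)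
          (div_nonneg (hA_nonneg m) (hμ m).le)
    _ = ENNReal.ofReal (kr ^ p) * ∑' m : ℕ, ENNReal.ofReal ((A m / ((m:ℝ)+1)) ^ p) :=
        ENNReal.tsum_mul_left
    _ ≤ ENNReal.ofReal (kr ^ p) * ENNReal.ofReal (q ^ p * ∑' i, a i ^ p) :=
        mul_le_mul_right hHardy _
    _ = ENNReal.ofReal ((q * kr) ^ p * ∑' n, a n ^ p) := by
        rw [← ENNReal.ofReal_mul (Real.rpow_nonneg hkr_pos.le p)]
        congr 1
        rw [Real.mul_rpow hq0.le hkr_pos.le]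
        ring
end

section
/- For 0 < β < 1, λ > 0, and r, s > 0 with r + s = λ, ∫₀^∞ u^{r-1} / (|1-u|^β (max{1,u})^{λ-β}) du = B(r, 1-β) + B(s, 1-β). -/
open MeasureTheory Set

noncomputable def betaFn (a b : ℝ) : ℝ := ∫ t in (0:ℝ)..1, t ^ (a - 1) * (1 - t) ^ (b - 1)

lemma betaIntLeft {a : ℝ} (ha : 0 < a) (b : ℝ) :
    IntervalIntegrable (fun t : ℝ => t ^ (a - 1) * (1 - t) ^ (b - 1)) volume 0 (1/2) := by
  apply IntervalIntegrable.mul_continuousOn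
  · exact intervalIntegral.intervalIntegrable_rpow' (by linarith)
  · apply ContinuousOn.rpow_const (by fun_prop)
    intro x hx
    rw [uIcc_of_le (by norm_num : (0:ℝ) ≤ 1/2)] at hx
    left; intro h; linarith [hx.2, sub_eq_zero.mp h]

lemma betaInt {a b : ℝ} (ha : 0 < a) (hb : 0 < b) :
    IntervalIntegrable (fun t : ℝ => t ^ (a - 1) * (1 - t) ^ (b - 1)) volume 0 1 := by
  refine (betaIntLeft ha b).trans ?_
  rw [IntervalIntegrable.iff_comp_neg]
  convert ((betaIntLeft hb a).comp_add_right 1).symm using 1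
  · ext x; ring_nf
  · norm_num
  · norm_num

lemma key_pointwise (beta lam r s t : ℝ)
    (hrs : r + s = lam) (ht0 : 0 < t) (ht1 : t < 1) :
    |(-(t^2)⁻¹)| • ((t⁻¹) ^ (r - 1) / (|1 - t⁻¹| ^ beta * max 1 t⁻¹ ^ (lam - beta)))
      = t ^ (s - 1) * (1 - t) ^ ((1 - beta) - 1) := by
  have h1t : (0:ℝ) < 1 - t := by linarith
  have hti : 1 < t⁻¹ := (one_lt_inv_iff₀).2 ⟨ht0, ht1⟩
  have habs : |1 - t⁻¹| = (1 - t)/t := by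
    rw [abs_of_nonpos (by linarith), neg_sub]; field_simp
  rw [smul_eq_mul, habs, max_eq_right hti.le, Real.div_rpow h1t.le ht0.le,
    Real.inv_rpow ht0.le, Real.inv_rpow ht0.le, ← Real.rpow_neg ht0.le, ← Real.rpow_neg ht0.le,
    abs_neg, abs_inv, abs_of_pos (by positivity),
    show ((t^2)⁻¹ : ℝ) = t ^ (-2 : ℝ) by
      rw [← Real.rpow_natCast t 2, ← Real.rpow_neg ht0.le]; norm_num,
    show (1 - beta) - 1 = -beta by ring, Real.rpow_neg h1t.le]
  have hne : ∀ x : ℝ, t ^ x ≠ 0 := fun x => (Real.rpow_pos_of_pos ht0 x).ne'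
  have hne2 : (1 - t) ^ beta ≠ 0 := (Real.rpow_pos_of_pos h1t beta).ne'
  field_simp
  rw [← Real.rpow_add ht0, ← Real.rpow_add ht0, ← Real.rpow_add ht0]
  congr 1
  linarith

theorem kernel_constant_abs_sub_max
    (beta lam r s : ℝ) (hb0 : 0 < beta) (hb1 : beta < 1) (hlam : 0 < lam)
    (hr : 0 < r) (hs : 0 < s) (hrs : r + s = lam) :
    ∫ u in Ioi (0:ℝ), u ^ (r - 1) / (|1 - u| ^ beta * max 1 u ^ (lam - beta))
      = betaFn r (1 - beta) + betaFn s (1 - beta) := by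
  set f : ℝ → ℝ := fun u => u ^ (r - 1) / (|1 - u| ^ beta * max 1 u ^ (lam - beta)) with hf
  have h1b : (0:ℝ) < 1 - beta := by linarith
  -- pointwise identity on Ioc 0 1
  have hEq1 : ∀ u ∈ Ioc (0:ℝ) 1, f u = u ^ (r - 1) * (1 - u) ^ ((1 - beta) - 1) := by
    rintro u ⟨hu0, hu1⟩
    rcases eq_or_lt_of_le hu1 with rfl | hu1
    · simp [hf, show (1:ℝ) - beta - 1 = -beta by ring, Real.zero_rpow hb0.ne',
        Real.zero_rpow (neg_ne_zero.mpr hb0.ne')]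
    · have h1u : (0:ℝ) < 1 - u := by linarith
      simp only [hf, max_eq_left hu1.le, Real.one_rpow, mul_one, abs_of_pos h1u,
        show (1 - beta) - 1 = -beta by ring, Real.rpow_neg h1u.le, div_eq_mul_inv]
  -- the derivative data for the substitution u = t⁻¹ on Ioo 0 1
  have himg : (fun t : ℝ => t⁻¹) '' Ioo 0 1 = Ioi 1 := by
    ext x
    constructor
    · rintro ⟨t, ⟨ht0, ht1⟩, rfl⟩
      exact (one_lt_inv_iff₀).2 ⟨ht0, ht1⟩
    · intro hx
      have hx1 : (1:ℝ) < x := hx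
      refine ⟨x⁻¹, ⟨by positivity, (inv_lt_one_iff₀).2 (Or.inr hx1)⟩, by
        simp [inv_inv]⟩
  have hderiv : ∀ t ∈ Ioo (0:ℝ) 1,
      HasDerivWithinAt (fun t : ℝ => t⁻¹) (-(t^2)⁻¹) (Ioo 0 1) t :=
    fun t ht => (hasDerivAt_inv (ne_of_gt ht.1)).hasDerivWithinAt
  have hinj : InjOn (fun t : ℝ => t⁻¹) (Ioo 0 1) := fun a _ b _ h => inv_injective h
  -- change of variables for the integral over Ioi 1
  have hchg : ∫ u in Ioi (1:ℝ), f u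
      = ∫ t in Ioo (0:ℝ) 1, |(-(t^2)⁻¹)| • f t⁻¹ := by
    rw [← himg]
    exact integral_image_eq_integral_abs_deriv_smul measurableSet_Ioo hderiv hinj f
  have hEq2 : ∀ t ∈ Ioo (0:ℝ) 1,
      |(-(t^2)⁻¹)| • f t⁻¹ = t ^ (s - 1) * (1 - t) ^ ((1 - beta) - 1) :=
    fun t ht => key_pointwise beta lam r s t hrs ht.1 ht.2
  -- integrability on Ioc 0 1
  have hbi1 : IntegrableOn (fun t : ℝ => t ^ (r - 1) * (1 - t) ^ ((1 - beta) - 1))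
      (Ioc 0 1) := by
    have := betaInt hr h1b
    rwa [intervalIntegrable_iff_integrableOn_Ioc_of_le zero_le_one] at this
  have hInt1 : IntegrableOn f (Ioc 0 1) :=
    (integrableOn_congr_fun hEq1 measurableSet_Ioc).mpr hbi1
  -- integrability on Ioi 1
  have hbi2 : IntegrableOn (fun t : ℝ => t ^ (s - 1) * (1 - t) ^ ((1 - beta) - 1))
      (Ioo 0 1) := by
    have := betaInt hs h1b
    rw [intervalIntegrable_iff_integrableOn_Ioc_of_le zero_le_one] at this
    exact this.mono_set Ioo_subset_Ioc_self
  have hInt2 : IntegrableOn f (Ioi 1) := by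
    rw [← himg,
      integrableOn_image_iff_integrableOn_abs_deriv_smul measurableSet_Ioo hderiv hinj f]
    exact (integrableOn_congr_fun hEq2 measurableSet_Ioo).mpr hbi2
  -- split the integral
  rw [← Ioc_union_Ioi_eq_Ioi (zero_le_one : (0:ℝ) ≤ 1),
    setIntegral_union (Ioc_disjoint_Ioi le_rfl) measurableSet_Ioi hInt1 hInt2]
  congr 1
  · rw [setIntegral_congr_fun measurableSet_Ioc hEq1, betaFn,
      intervalIntegral.integral_of_le zero_le_one]
  · rw [hchg, setIntegral_congr_fun measurableSet_Ioo hEq2, betaFn,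
      intervalIntegral.integral_of_le zero_le_one, integral_Ioc_eq_integral_Ioo]
end

section
/- For 0 < β < 1, λ > 0, and r, s with 0 < r < β, 0 < s < β, r + s = λ, ∫₀^∞ (min{1,u})^{β-λ} u^{r-1} / |1-u|^β du = B(β - r, 1-β) + B(β - s, 1-β). -/
open MeasureTheory Set

lemma aux_II_left (a b : ℝ) (ha : -1 < a) :
    IntervalIntegrable (fun t : ℝ => t ^ a * (1 - t) ^ b) volume 0 (1/2) := by
  rw [intervalIntegrable_iff_integrableOn_Ioc_of_le (by norm_num)]
  have hmeas : AEStronglyMeasurable (fun t : ℝ => t ^ a * (1 - t) ^ b)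
      (volume.restrict (Ioc (0:ℝ) (1/2))) := by
    apply Measurable.aestronglyMeasurable
    fun_prop
  have hg : IntegrableOn (fun t : ℝ => ((1/2:ℝ) ^ b + 1) * t ^ a) (Ioc (0:ℝ) (1/2)) volume := by
    rw [← intervalIntegrable_iff_integrableOn_Ioc_of_le (by norm_num)]
    exact (intervalIntegral.intervalIntegrable_rpow' ha).const_mul _
  refine hg.mono' hmeas ?_
  filter_upwards [ae_restrict_mem measurableSet_Ioc] with t ht
  have ht0 : (0:ℝ) < t := ht.1
  have h1t : (1/2:ℝ) ≤ 1 - t := by linarith [ht.2]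
  have h1t0 : (0:ℝ) < 1 - t := lt_of_lt_of_le (by norm_num) h1t
  have hb : (1 - t) ^ b ≤ (1/2:ℝ) ^ b + 1 := by
    rcases le_or_gt b 0 with hb0 | hb0
    · have := Real.rpow_le_rpow_of_nonpos (by norm_num : (0:ℝ) < 1/2) h1t hb0
      linarith
    · have : (1 - t) ^ b ≤ 1 := Real.rpow_le_one h1t0.le (by linarith [ht.2]) hb0.le
      have h2 : (0:ℝ) ≤ (1/2:ℝ) ^ b := (Real.rpow_pos_of_pos (by norm_num) b).le
      linarith
  rw [Real.norm_eq_abs, abs_of_nonneg (by positivity)]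
  calc t ^ a * (1 - t) ^ b ≤ t ^ a * ((1/2:ℝ) ^ b + 1) := by
        exact mul_le_mul_of_nonneg_left hb (Real.rpow_nonneg ht0.le a)
    _ = ((1/2:ℝ) ^ b + 1) * t ^ a := mul_comm _ _

lemma aux_betaIntegrableOn (a b : ℝ) (ha : 0 < a) (hb : 0 < b) :
    IntegrableOn (fun t : ℝ => t ^ (a-1) * (1 - t) ^ (b-1)) (Ioo (0:ℝ) 1) volume := by
  have h1 : IntegrableOn (fun t : ℝ => t ^ (a-1) * (1 - t) ^ (b-1)) (Ioc (0:ℝ) (1/2)) volume := by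
    rw [← intervalIntegrable_iff_integrableOn_Ioc_of_le (by norm_num)]
    exact aux_II_left (a-1) (b-1) (by linarith)
  have h2 : IntegrableOn (fun t : ℝ => t ^ (a-1) * (1 - t) ^ (b-1)) (Ioc (1/2:ℝ) 1) volume := by
    have := (aux_II_left (b-1) (a-1) (by linarith)).comp_sub_left 1
    simp only [sub_sub_cancel, sub_zero] at this
    have heq : (fun x : ℝ => (1 - x) ^ (b-1) * x ^ (a-1))
        = fun t : ℝ => t ^ (a-1) * (1 - t) ^ (b-1) := funext fun x => mul_comm _ _
    rw [heq] at this
    rw [← intervalIntegrable_iff_integrableOn_Ioc_of_le (by norm_num)]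
    norm_num at this; exact this.symm
  have hsub : Ioo (0:ℝ) 1 ⊆ Ioc 0 (1/2) ∪ Ioc (1/2) 1 := by
    intro x hx
    rcases le_or_gt x (1/2) with h | h
    · exact Or.inl ⟨hx.1, h⟩
    · exact Or.inr ⟨h, hx.2.le⟩
  exact (h1.union h2).mono_set hsub

lemma aux_betaFn_Ioo (a b : ℝ) :
    betaFn a b = ∫ t in Ioo (0:ℝ) 1, t ^ (a-1) * (1 - t) ^ (b-1) := by
  rw [betaFn, intervalIntegral.integral_of_le zero_le_one, integral_Ioc_eq_integral_Ioo]

lemma aux_image_inv : (fun x : ℝ => x⁻¹) '' Ioo (0:ℝ) 1 = Ioi (1:ℝ) := by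
  ext x
  constructor
  · rintro ⟨t, ⟨ht0, ht1⟩, rfl⟩
    exact ((one_lt_inv₀ ht0).mpr ht1 : 1 < t⁻¹)
  · intro hx
    have hx0 : (0:ℝ) < x := lt_trans one_pos hx
    exact ⟨x⁻¹, ⟨inv_pos.mpr hx0, inv_lt_one_of_one_lt₀ hx⟩, inv_inv x⟩

theorem kernel_constant_min_abs_sub
    (beta lam r s : ℝ) (hb0 : 0 < beta) (hb1 : beta < 1) (hlam : 0 < lam)
    (hr0 : 0 < r) (hrb : r < beta) (hs0 : 0 < s) (hsb : s < beta)
    (hrs : r + s = lam) :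
    ∫ u in Ioi (0:ℝ), min 1 u ^ (beta - lam) * u ^ (r - 1) / |1 - u| ^ beta
      = betaFn (beta - r) (1 - beta) + betaFn (beta - s) (1 - beta) := by
  set f : ℝ → ℝ := fun u => min 1 u ^ (beta - lam) * u ^ (r - 1) / |1 - u| ^ beta with hf
  set g : ℝ → ℝ := fun u => u ^ (r - 1) * (u - 1) ^ (-beta) with hgdef
  have hfg : EqOn f g (Ioi (1:ℝ)) := by
    intro u hu
    have hu1 : (1:ℝ) < u := hu
    simp only [f, g, min_eq_left hu1.le, Real.one_rpow, one_mul]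
    rw [abs_of_neg (by linarith : (1:ℝ) - u < 0), neg_sub, div_eq_mul_inv,
      ← Real.rpow_neg (by linarith : (0:ℝ) ≤ u - 1)]
  have hlow : EqOn f (fun u : ℝ => u ^ (beta - s - 1) * (1 - u) ^ ((1 - beta) - 1))
      (Ioo (0:ℝ) 1) := by
    intro u hu
    have hu0 : (0:ℝ) < u := hu.1
    have hu1 : u < 1 := hu.2
    simp only [f]
    rw [min_eq_right hu1.le, abs_of_pos (by linarith : (0:ℝ) < 1 - u), div_eq_mul_inv,
      ← Real.rpow_neg (by linarith : (0:ℝ) ≤ 1 - u), ← Real.rpow_add hu0]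
    have hexp : beta - lam + (r - 1) = beta - s - 1 := by rw [← hrs]; ring
    rw [hexp, show -beta = (1 - beta) - 1 by ring]
  have hderiv : ∀ t ∈ Ioo (0:ℝ) 1, HasDerivWithinAt (fun x : ℝ => x⁻¹) (-(t^2)⁻¹)
      (Ioo (0:ℝ) 1) t := fun t ht => (hasDerivAt_inv (ne_of_gt ht.1)).hasDerivWithinAt
  have hinj : InjOn (fun x : ℝ => x⁻¹) (Ioo (0:ℝ) 1) := inv_injective.injOn
  have hcov : EqOn (fun t : ℝ => |(-(t^2)⁻¹)| • g t⁻¹)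
      (fun t : ℝ => t ^ (beta - r - 1) * (1 - t) ^ ((1 - beta) - 1)) (Ioo (0:ℝ) 1) := by
    intro t ht
    have ht0 : (0:ℝ) < t := ht.1
    have ht1 : t < 1 := ht.2
    have h1t : (0:ℝ) < 1 - t := by linarith
    simp only [g, smul_eq_mul, abs_neg, abs_inv, abs_of_pos (pow_pos ht0 2)]
    have h1 : (t^2)⁻¹ = t ^ (-2:ℝ) := by
      rw [← Real.rpow_natCast t 2, ← Real.rpow_neg ht0.le]; norm_num
    have h2 : (t⁻¹) ^ (r - 1) = t ^ (1 - r) := by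
      rw [← Real.rpow_neg_one t, ← Real.rpow_mul ht0.le]; ring_nf
    have h3 : t⁻¹ - 1 = (1 - t) / t := by field_simp
    have h4 : ((1 - t) / t) ^ (-beta) = (1 - t) ^ (-beta) * t ^ beta := by
      rw [Real.div_rpow h1t.le ht0.le, div_eq_mul_inv, ← Real.rpow_neg ht0.le, neg_neg]
    rw [h1, h2, h3, h4, show (1 - beta) - 1 = -beta by ring]
    rw [mul_comm ((1 - t) ^ (-beta)) (t ^ beta), ← mul_assoc, ← mul_assoc,
      ← Real.rpow_add ht0, ← Real.rpow_add ht0]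
    congr 1
    ring
  have hint_r : IntegrableOn (fun t : ℝ => t ^ (beta - r - 1) * (1 - t) ^ ((1 - beta) - 1))
      (Ioo (0:ℝ) 1) volume := by
    have := aux_betaIntegrableOn (beta - r) (1 - beta) (by linarith) (by linarith)
    simpa using this
  have hint_s : IntegrableOn (fun t : ℝ => t ^ (beta - s - 1) * (1 - t) ^ ((1 - beta) - 1))
      (Ioo (0:ℝ) 1) volume := by
    have := aux_betaIntegrableOn (beta - s) (1 - beta) (by linarith) (by linarith)
    simpa using this
  have hint2 : IntegrableOn f (Ioi (1:ℝ)) volume := by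
    rw [integrableOn_congr_fun hfg measurableSet_Ioi, ← aux_image_inv,
      integrableOn_image_iff_integrableOn_abs_deriv_smul measurableSet_Ioo hderiv hinj]
    rw [integrableOn_congr_fun hcov measurableSet_Ioo]
    exact hint_r
  have hint1 : IntegrableOn f (Ioc (0:ℝ) 1) volume := by
    rw [integrableOn_Ioc_iff_integrableOn_Ioo, integrableOn_congr_fun hlow measurableSet_Ioo]
    exact hint_s
  have e1 : ∫ u in Ioc (0:ℝ) 1, f u = betaFn (beta - s) (1 - beta) := by
    rw [integral_Ioc_eq_integral_Ioo, setIntegral_congr_fun measurableSet_Ioo hlow,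
      aux_betaFn_Ioo]
  have e2 : ∫ u in Ioi (1:ℝ), f u = betaFn (beta - r) (1 - beta) := by
    rw [setIntegral_congr_fun measurableSet_Ioi hfg, ← aux_image_inv,
      integral_image_eq_integral_abs_deriv_smul measurableSet_Ioo hderiv hinj,
      setIntegral_congr_fun measurableSet_Ioo hcov, aux_betaFn_Ioo]
  calc ∫ u in Ioi (0:ℝ), f u
      = ∫ u in Ioc (0:ℝ) 1 ∪ Ioi 1, f u := by rw [Ioc_union_Ioi_eq_Ioi zero_le_one]
    _ = (∫ u in Ioc (0:ℝ) 1, f u) + ∫ u in Ioi (1:ℝ), f u :=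
        setIntegral_union (Ioc_disjoint_Ioi le_rfl) measurableSet_Ioi hint1 hint2
    _ = betaFn (beta - r) (1 - beta) + betaFn (beta - s) (1 - beta) := by
        rw [e1, e2, add_comm]
end

section
/- For λ > 0, r, s > 0 with r + s = λ, and β > -min{r,s} with β ≠ 0, ∫₀^∞ |1 - u^β| u^{r-1} / (max{1,u})^{λ+β} du = |β| (r(r+β) + s(s+β)) / (r s (r+β)(s+β)). -/
open MeasureTheory Set

private lemma intIoc (a : ℝ) (ha : 0 < a) :
    ∫ u in Ioc (0:ℝ) 1, u ^ (a - 1) = 1 / a := by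
  rw [← intervalIntegral.integral_of_le zero_le_one,
    integral_rpow (Or.inl (by linarith : (-1:ℝ) < a - 1))]
  have h1 : a - 1 + 1 = a := by ring
  rw [h1, Real.one_rpow, Real.zero_rpow ha.ne']
  ring

private lemma integrableIoc (a : ℝ) (ha : 0 < a) :
    IntegrableOn (fun u : ℝ => u ^ (a - 1)) (Ioc (0:ℝ) 1) := by
  rw [← intervalIntegrable_iff_integrableOn_Ioc_of_le zero_le_one]
  exact intervalIntegral.intervalIntegrable_rpow' (by linarith)

private lemma intIoi (b : ℝ) (hb : b < -1) :
    ∫ u in Ioi (1:ℝ), u ^ b = 1 / (-b - 1) := by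
  rw [integral_Ioi_rpow_of_lt hb one_pos, Real.one_rpow]
  rw [div_eq_div_iff (by linarith) (by linarith)]
  ring

private lemma integrableIoi (b : ℝ) (hb : b < -1) :
    IntegrableOn (fun u : ℝ => u ^ b) (Ioi (1:ℝ)) :=
  integrableOn_Ioi_rpow_of_lt hb one_pos

theorem kernel_constant_abs_pow_sub_max
    (beta lam r s : ℝ) (hlam : 0 < lam)
    (hr : 0 < r) (hs : 0 < s) (hrs : r + s = lam)
    (hbeta : -min r s < beta) (hbeta0 : beta ≠ 0) :
    ∫ u in Ioi (0:ℝ), |1 - u ^ beta| * u ^ (r - 1) / max 1 u ^ (lam + beta)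
      = |beta| * (r * (r + beta) + s * (s + beta)) /
          (r * s * (r + beta) * (s + beta)) := by
  have hrb : 0 < r + beta := by
    have h1 : -r ≤ -min r s := by
      have := min_le_left r s; linarith
    linarith [lt_of_le_of_lt h1 hbeta]
  have hsb : 0 < s + beta := by
    have h1 : -s ≤ -min r s := by
      have := min_le_right r s; linarith
    linarith [lt_of_le_of_lt h1 hbeta]
  set f : ℝ → ℝ := fun u => |1 - u ^ beta| * u ^ (r - 1) / max 1 u ^ (lam + beta)
    with hf
  have hsplit : Ioi (0:ℝ) = Ioc 0 1 ∪ Ioi 1 := (Ioc_union_Ioi_eq_Ioi zero_le_one).symm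
  rcases hbeta0.lt_or_gt with hb | hb
  · -- beta < 0
    have heq1 : EqOn f (fun u => u ^ (r + beta - 1) - u ^ (r - 1)) (Ioc (0:ℝ) 1) := by
      intro u hu
      obtain ⟨hu0, hu1⟩ := hu
      have hub : 1 ≤ u ^ beta := Real.one_le_rpow_of_pos_of_le_one_of_nonpos hu0 hu1 hb.le
      simp only [hf, max_eq_left hu1, Real.one_rpow, div_one]
      rw [abs_of_nonpos (by linarith), neg_sub]
      have h2 : u ^ (r + beta - 1) = u ^ beta * u ^ (r - 1) := by
        rw [← Real.rpow_add hu0]; ring_nf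
      rw [h2]; ring
    have heq2 : EqOn f (fun u => u ^ (-s - beta - 1) - u ^ (-s - 1)) (Ioi (1:ℝ)) := by
      intro u hu
      have hu1 : (1:ℝ) < u := hu
      have hu0 : (0:ℝ) < u := lt_trans one_pos hu1
      have hub : u ^ beta < 1 := Real.rpow_lt_one_of_one_lt_of_neg hu1 hb
      simp only [hf, max_eq_right hu1.le]
      rw [abs_of_nonneg (by linarith)]
      have e1 : u ^ (-s - beta - 1) = u ^ (r - 1) / u ^ (lam + beta) := by
        rw [← Real.rpow_sub hu0]; congr 1; linarith
      have e2 : u ^ (-s - 1) = u ^ beta * u ^ (r - 1) / u ^ (lam + beta) := by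
        rw [← Real.rpow_add hu0, ← Real.rpow_sub hu0]; congr 1; linarith
      rw [e1, e2]; ring
    have hg1 : IntegrableOn (fun u : ℝ => u ^ (r + beta - 1) - u ^ (r - 1)) (Ioc (0:ℝ) 1) :=
      (integrableIoc (r + beta) hrb).sub (integrableIoc r hr)
    have hg2 : IntegrableOn (fun u : ℝ => u ^ (-s - beta - 1) - u ^ (-s - 1)) (Ioi (1:ℝ)) :=
      (integrableIoi (-s - beta - 1) (by linarith)).sub (integrableIoi (-s - 1) (by linarith))
    have hf1 : IntegrableOn f (Ioc (0:ℝ) 1) :=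
      hg1.congr_fun heq1.symm measurableSet_Ioc
    have hf2 : IntegrableOn f (Ioi (1:ℝ)) :=
      hg2.congr_fun heq2.symm measurableSet_Ioi
    rw [hsplit, setIntegral_union (Ioc_disjoint_Ioi le_rfl) measurableSet_Ioi hf1 hf2,
      setIntegral_congr_fun measurableSet_Ioc heq1, setIntegral_congr_fun measurableSet_Ioi heq2,
      integral_sub (integrableIoc (r + beta) hrb) (integrableIoc r hr),
      integral_sub (integrableIoi (-s - beta - 1) (by linarith))
        (integrableIoi (-s - 1) (by linarith)),
      intIoc (r + beta) hrb, intIoc r hr,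
      intIoi (-s - beta - 1) (by linarith), intIoi (-s - 1) (by linarith),
      abs_of_neg hb]
    have e3 : -(-s - beta - 1) - 1 = s + beta := by ring
    have e4 : -(-s - 1) - 1 = s := by ring
    rw [e3, e4]
    field_simp
    ring
  · -- 0 < beta
    have heq1 : EqOn f (fun u => u ^ (r - 1) - u ^ (r + beta - 1)) (Ioc (0:ℝ) 1) := by
      intro u hu
      obtain ⟨hu0, hu1⟩ := hu
      have hub : u ^ beta ≤ 1 := Real.rpow_le_one hu0.le hu1 hb.le
      simp only [hf, max_eq_left hu1, Real.one_rpow, div_one]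
      rw [abs_of_nonneg (by linarith)]
      have h2 : u ^ (r + beta - 1) = u ^ beta * u ^ (r - 1) := by
        rw [← Real.rpow_add hu0]; ring_nf
      rw [h2]; ring
    have heq2 : EqOn f (fun u => u ^ (-s - 1) - u ^ (-s - beta - 1)) (Ioi (1:ℝ)) := by
      intro u hu
      have hu1 : (1:ℝ) < u := hu
      have hu0 : (0:ℝ) < u := lt_trans one_pos hu1
      have hub : 1 < u ^ beta :=
        (Real.one_lt_rpow_iff_of_pos hu0).mpr (Or.inl ⟨hu1, hb⟩)
      simp only [hf, max_eq_right hu1.le]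
      rw [abs_of_nonpos (by linarith), neg_sub]
      have e1 : u ^ (-s - beta - 1) = u ^ (r - 1) / u ^ (lam + beta) := by
        rw [← Real.rpow_sub hu0]; congr 1; linarith
      have e2 : u ^ (-s - 1) = u ^ beta * u ^ (r - 1) / u ^ (lam + beta) := by
        rw [← Real.rpow_add hu0, ← Real.rpow_sub hu0]; congr 1; linarith
      rw [e1, e2]; ring
    have hg1 : IntegrableOn (fun u : ℝ => u ^ (r - 1) - u ^ (r + beta - 1)) (Ioc (0:ℝ) 1) :=
      (integrableIoc r hr).sub (integrableIoc (r + beta) hrb)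
    have hg2 : IntegrableOn (fun u : ℝ => u ^ (-s - 1) - u ^ (-s - beta - 1)) (Ioi (1:ℝ)) :=
      (integrableIoi (-s - 1) (by linarith)).sub (integrableIoi (-s - beta - 1) (by linarith))
    have hf1 : IntegrableOn f (Ioc (0:ℝ) 1) :=
      hg1.congr_fun heq1.symm measurableSet_Ioc
    have hf2 : IntegrableOn f (Ioi (1:ℝ)) :=
      hg2.congr_fun heq2.symm measurableSet_Ioi
    rw [hsplit, setIntegral_union (Ioc_disjoint_Ioi le_rfl) measurableSet_Ioi hf1 hf2,
      setIntegral_congr_fun measurableSet_Ioc heq1, setIntegral_congr_fun measurableSet_Ioi heq2,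
      integral_sub (integrableIoc r hr) (integrableIoc (r + beta) hrb),
      integral_sub (integrableIoi (-s - 1) (by linarith))
        (integrableIoi (-s - beta - 1) (by linarith)),
      intIoc r hr, intIoc (r + beta) hrb,
      intIoi (-s - 1) (by linarith), intIoi (-s - beta - 1) (by linarith),
      abs_of_pos hb]
    have e3 : -(-s - beta - 1) - 1 = s + beta := by ring
    have e4 : -(-s - 1) - 1 = s := by ring
    rw [e3, e4]
    field_simp
    ring
end
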